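/- arXiv:2312.03334 — 3 statements merged into one kernel-verified Lean document; each statement's English description precedes it below -/
import Mathlib

section
/- Let p : A → A' be a morphism of graphs and assume A' is connected. Then p is a covering morphism if and only if the edge map p₁ restricts to a bijection from q⁺ onto p₀(q)⁺ for every vertex q of A. -/
/-- A rooted directed multigraph. -/
structure RGraph where
  V : Type
  E : Type
  s : E → V
  t : E → V
  root : V

namespace RGraph

/-- `l` is a path: consecutive edges are composable. -/
def IsPath (A : RGraph) (l : List A.E) : Prop :=
  l.Chain' (fun e f => A.t e = A.s f)

/-- `l` is a path starting at the vertex `q`. -/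
def PathFrom (A : RGraph) (q : A.V) (l : List A.E) : Prop :=
  A.IsPath l ∧ ∀ e ∈ l.head?, A.s e = q

/-- The target of the path `l` started at `q` (equal to `q` for the empty path). -/
def pathTarget (A : RGraph) (q : A.V) (l : List A.E) : A.V :=
  l.foldl (fun _ e => A.t e) q

@[simp] lemma pathTarget_nil (A : RGraph) (q : A.V) : A.pathTarget q [] = q := rfl

@[simp] lemma pathTarget_cons (A : RGraph) (q : A.V) (a : A.E) (l : List A.E) :
    A.pathTarget q (a :: l) = A.pathTarget (A.t a) l := rfl

lemma pathTarget_append (A : RGraph) (q : A.V) (l l' : List A.E) :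
    A.pathTarget q (l ++ l') = A.pathTarget (A.pathTarget q l) l' := by
  simp [pathTarget]

@[simp] lemma pathTarget_append_single (A : RGraph) (q : A.V) (l : List A.E) (e : A.E) :
    A.pathTarget q (l ++ [e]) = A.t e := by
  rw [pathTarget_append]; rfl

lemma pathFrom_nil (A : RGraph) (q : A.V) : A.PathFrom q [] :=
  ⟨List.isChain_nil, by simp⟩

lemma pathTarget_getLast {A : RGraph} {q : A.V} {l : List A.E} {x : A.E}
    (hx : x ∈ l.getLast?) : A.pathTarget q l = A.t x := by
  induction l generalizing q with
  | nil => simp at hx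
  | cons a l ih =>
    cases l with
    | nil => simp at hx; subst hx; rfl
    | cons b l =>
      rw [List.getLast?_cons_cons] at hx
      simpa using ih (q := A.t a) hx

lemma pathFrom_append_single {A : RGraph} {q : A.V} {l : List A.E} {e : A.E}
    (h : A.PathFrom q l) (he : A.s e = A.pathTarget q l) :
    A.PathFrom q (l ++ [e]) := by
  constructor
  · apply List.isChain_append.mpr
    refine ⟨h.1, List.isChain_singleton _, ?_⟩
    intro x hx y hy
    simp at hy
    subst hy
    rw [he]
    exact (pathTarget_getLast hx).symm
  · intro f hf
    cases l with
    | nil =>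
      simp at hf
      subst hf
      simpa using he
    | cons a l =>
      simp at hf
      subst hf
      exact h.2 a (by simp)

/-- `w` is reachable from `q` by an oriented path. -/
def Reach (A : RGraph) (q w : A.V) : Prop :=
  ∃ l, A.PathFrom q l ∧ A.pathTarget q l = w

lemma reach_self (A : RGraph) (q : A.V) : A.Reach q q :=
  ⟨[], A.pathFrom_nil q, rfl⟩

lemma reach_target {A : RGraph} {q : A.V} {e : A.E} (h : A.Reach q (A.s e)) :
    A.Reach q (A.t e) := by
  obtain ⟨l, hl, ht⟩ := h
  exact ⟨l ++ [e], pathFrom_append_single hl ht.symm, by simp⟩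

/-- A graph is connected (as a rooted directed graph) if every vertex is reachable
from the root. -/
def Connected (A : RGraph) : Prop := ∀ w : A.V, A.Reach A.root w

/-- A graph is a tree if the target map from paths emanating from the root to
vertices is a bijection. -/
def IsTree (A : RGraph) : Prop :=
  Function.Bijective
    (fun l : {l : List A.E // A.PathFrom A.root l} => A.pathTarget A.root l.1)

/-- A graph is locally finite if every vertex has finitely many outgoing edges. -/
def LocallyFinite (A : RGraph) : Prop := ∀ q : A.V, Finite {e : A.E // A.s e = q}

/-- Adjacency: there is an edge from `v` to `w`. -/
def Adj (A : RGraph) (v w : A.V) : Prop := ∃ e, A.s e = v ∧ A.t e = w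

/-- The induced rooted subgraph on all vertices reachable from `q` (the "cone" at `q`). -/
def subgraph (A : RGraph) (q : A.V) : RGraph where
  V := {w // A.Reach q w}
  E := {e // A.Reach q (A.s e)}
  s := fun e => ⟨A.s e.1, e.2⟩
  t := fun e => ⟨A.t e.1, reach_target e.2⟩
  root := ⟨q, A.reach_self q⟩

/-- The truncation of the cone at `v` to vertices at distance at most `d` from `v`. -/
def trunc (A : RGraph) (v : A.V) (d : ℕ) : RGraph where
  V := {w // ∃ l, A.PathFrom v l ∧ A.pathTarget v l = w ∧ l.length ≤ d}
  E := {e // ∃ l, A.PathFrom v l ∧ A.pathTarget v l = A.s e ∧ l.length < d}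
  s := fun e => ⟨A.s e.1, e.2.imp fun _ h => ⟨h.1, h.2.1, h.2.2.le⟩⟩
  t := fun e => ⟨A.t e.1, by
    obtain ⟨l, h1, h2, h3⟩ := e.2
    exact ⟨l ++ [e.1], pathFrom_append_single h1 h2.symm, by simp,
      by simp only [List.length_append, List.length_singleton]; omega⟩⟩
  root := ⟨v, [], A.pathFrom_nil v, rfl, Nat.zero_le d⟩

/-- The universal covering tree of `A`: vertices are the paths emanating from the root. -/
def cover (A : RGraph) : RGraph where
  V := {l : List A.E // A.PathFrom A.root l}
  E := {x : {l : List A.E // A.PathFrom A.root l} × A.E //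
          A.s x.2 = A.pathTarget A.root x.1.1}
  s := fun x => x.1.1
  t := fun x => ⟨x.1.1.1 ++ [x.1.2], pathFrom_append_single x.1.1.2 x.2⟩
  root := ⟨[], A.pathFrom_nil _⟩

end RGraph

/-- A morphism of rooted directed multigraphs. -/
structure GraphHom (A B : RGraph) where
  v : A.V → B.V
  e : A.E → B.E
  root_eq : v A.root = B.root
  s_eq : ∀ x, B.s (e x) = v (A.s x)
  t_eq : ∀ x, B.t (e x) = v (A.t x)

namespace GraphHom

variable {A B : RGraph}

/-- The unique path lifting property. -/
def UPLP (p : GraphHom A B) : Prop :=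
  ∀ (q : A.V) (l' : List B.E), B.PathFrom (p.v q) l' →
    ∃! l : List A.E, A.PathFrom q l ∧ l.map p.e = l'

/-- A covering morphism: surjective on vertices, with the unique path lifting property. -/
def IsCovering (p : GraphHom A B) : Prop := Function.Surjective p.v ∧ p.UPLP

/-- An isomorphism of graphs: bijective on vertices and on edges. -/
def IsIso (p : GraphHom A B) : Prop := Function.Bijective p.v ∧ Function.Bijective p.e

/-- The restriction of the edge map to the edges emanating from `q`. -/
def outMap (p : GraphHom A B) (q : A.V) :
    {e : A.E // A.s e = q} → {e' : B.E // B.s e' = p.v q} :=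
  fun e => ⟨p.e e.1, by rw [p.s_eq, e.2]⟩

lemma isPath_map (p : GraphHom A B) {l : List A.E} (h : A.IsPath l) :
    B.IsPath (l.map p.e) := by
  show List.IsChain _ (l.map p.e)
  rw [List.isChain_map]
  exact List.IsChain.imp (fun a b hab => by rw [p.t_eq, p.s_eq, hab]) h

lemma pathFrom_map (p : GraphHom A B) {q : A.V} {l : List A.E} (h : A.PathFrom q l) :
    B.PathFrom (p.v q) (l.map p.e) := by
  refine ⟨p.isPath_map h.1, ?_⟩
  intro f hf
  cases l with
  | nil => simp at hf
  | cons a l =>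
    simp at hf
    subst hf
    rw [p.s_eq, h.2 a (by simp)]

lemma pathTarget_map (p : GraphHom A B) (q : A.V) (l : List A.E) :
    B.pathTarget (p.v q) (l.map p.e) = p.v (A.pathTarget q l) := by
  induction l generalizing q with
  | nil => rfl
  | cons a l ih =>
    show B.pathTarget (B.t (p.e a)) (l.map p.e) = _
    rw [p.t_eq]
    exact ih (A.t a)

lemma reach_map (p : GraphHom A B) {q w : A.V} (h : A.Reach q w) :
    B.Reach (p.v q) (p.v w) := by
  obtain ⟨l, hl, ht⟩ := h
  exact ⟨l.map p.e, p.pathFrom_map hl, by rw [p.pathTarget_map, ht]⟩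

end GraphHom

/-- Two graphs are isomorphic. -/
def RGraph.Iso (A B : RGraph) : Prop := ∃ p : GraphHom A B, p.IsIso

/-- The universal covering morphism from the universal covering tree of `A` to `A`. -/
def RGraph.uCover (A : RGraph) : GraphHom A.cover A where
  v := fun l => A.pathTarget A.root l.1
  e := fun x => x.1.2
  root_eq := rfl
  s_eq := fun x => x.2
  t_eq := fun x => by
    show A.t x.1.2 = A.pathTarget A.root (x.1.1.1 ++ [x.1.2])
    simp

/-- The morphism induced between universal covering trees by a morphism of graphs. -/
def GraphHom.coverMap {A B : RGraph} (p : GraphHom A B) : GraphHom A.cover B.cover where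
  v := fun l => ⟨l.1.map p.e, by have := p.pathFrom_map l.2; rwa [p.root_eq] at this⟩
  e := fun x =>
    ⟨(⟨x.1.1.1.map p.e, by have := p.pathFrom_map x.1.1.2; rwa [p.root_eq] at this⟩,
      p.e x.1.2), by
        show B.s (p.e x.1.2) = B.pathTarget B.root (x.1.1.1.map p.e)
        rw [p.s_eq, x.2, ← p.root_eq, p.pathTarget_map]⟩
  root_eq := Subtype.ext rfl
  s_eq := fun _ => rfl
  t_eq := fun x => by
    apply Subtype.ext
    simp [RGraph.cover]

/-- `A` is a covering quotient of `T`. -/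
def IsCovQuotient (T A : RGraph) : Prop := ∃ p : GraphHom T A, p.IsCovering

/-- `A` is a minimal covering quotient of `T`: a covering quotient with the minimal
number of vertices among all covering quotients of `T`. -/
def IsMinCovQuotient (T A : RGraph) : Prop :=
  IsCovQuotient T A ∧
    ∀ B : RGraph, IsCovQuotient T B → Cardinal.mk A.V ≤ Cardinal.mk B.V

/-- `T` has finitely many cone types. -/
def FinManyCones (T : RGraph) : Prop :=
  ∃ S : Set T.V, S.Finite ∧ ∀ v : T.V, ∃ w ∈ S, RGraph.Iso (T.subgraph v) (T.subgraph w)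

/-- A self-similar tree: a locally finite tree with finitely many cone types. -/
def SelfSimilarTree (T : RGraph) : Prop := T.IsTree ∧ T.LocallyFinite ∧ FinManyCones T

namespace RGraph

/-- The automorphism group of a graph, realized as the group of root-preserving,
adjacency-preserving permutations of the vertex set (for trees this is the same as the
automorphism group in the sense of graph morphisms, since in a tree an edge is determined
by its endpoints). -/
def autGroup (T : RGraph) : Subgroup (Equiv.Perm T.V) where
  carrier := {g | g T.root = T.root ∧ ∀ v w, T.Adj v w ↔ T.Adj (g v) (g w)}
  one_mem' := ⟨rfl, fun _ _ => Iff.rfl⟩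
  mul_mem' := by
    rintro a b ⟨ha1, ha2⟩ ⟨hb1, hb2⟩
    refine ⟨?_, fun v w => ?_⟩
    · show a (b T.root) = T.root
      rw [hb1, ha1]
    · exact (hb2 v w).trans (ha2 (b v) (b w))
  inv_mem' := by
    rintro a ⟨ha1, ha2⟩
    refine ⟨?_, fun v w => ?_⟩
    · show a.symm T.root = T.root
      rw [Equiv.symm_apply_eq]
      exact ha1.symm
    · have h := ha2 (a⁻¹ v) (a⁻¹ w)
      simpa using h.symm

/-- The subgroup of permutations of the vertices fixing every vertex outside
of the cone at `v`. -/
def fixOutside (T : RGraph) (v : T.V) : Subgroup (Equiv.Perm T.V) where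
  carrier := {g | ∀ w, ¬ T.Reach v w → g w = w}
  one_mem' := fun _ _ => rfl
  mul_mem' := by
    intro a b ha hb w hw
    show a (b w) = w
    rw [hb w hw, ha w hw]
  inv_mem' := by
    intro a ha w hw
    show a.symm w = w
    rw [Equiv.symm_apply_eq]
    exact (ha w hw).symm

/-- The rigid stabilizer of the vertex `v`: automorphisms fixing every vertex
outside the subtree spanned by `v` and its descendants. -/
def rist (T : RGraph) (v : T.V) : Subgroup (Equiv.Perm T.V) :=
  T.autGroup ⊓ T.fixOutside v

/-- The set of vertices at distance `n` from the root. -/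
def level (T : RGraph) (n : ℕ) : Set T.V :=
  {v | ∃ l : List T.E, T.PathFrom T.root l ∧ T.pathTarget T.root l = v ∧ l.length = n}

/-- The `n`-th rigid level stabilizer: the subgroup generated by the rigid stabilizers
of the vertices at distance `n` from the root. -/
def ristLevel (T : RGraph) (n : ℕ) : Subgroup (Equiv.Perm T.V) :=
  ⨆ v ∈ T.level n, T.rist v

/-- The `n`-th rigid level stabilizer, as a subgroup of the automorphism group. -/
def ristIn (T : RGraph) (n : ℕ) : Subgroup ↥T.autGroup :=
  (T.ristLevel n).comap T.autGroup.subtype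

end RGraph

/-- A recurrent double edge: a pair of distinct parallel edges such that there is an
oriented loop which contains one of them, or from which their common source can be
reached. -/
def HasRecDoubleEdge (A : RGraph) : Prop :=
  ∃ e₁ e₂ : A.E, e₁ ≠ e₂ ∧ A.s e₁ = A.s e₂ ∧ A.t e₁ = A.t e₂ ∧
    ((∃ (q : A.V) (l : List A.E),
        A.PathFrom q l ∧ l ≠ [] ∧ A.pathTarget q l = q ∧ (e₁ ∈ l ∨ e₂ ∈ l)) ∨
     (∃ (q : A.V) (l : List A.E),
        A.PathFrom q l ∧ l ≠ [] ∧ A.pathTarget q l = q ∧ A.Reach q (A.s e₁)))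

/-- A deterministic finite automaton over the alphabet `A`, with a partial transition
function, a single initial state, and all states accepting. -/
structure PDFA (A : Type) where
  Q : Type
  finQ : Finite Q
  neQ : Nonempty Q
  δ : Q → A → Option Q
  init : Q

namespace PDFA

variable {A : Type} (M : PDFA A)

/-- Running the automaton from state `q` on a word; `none` if it gets stuck. -/
def run : M.Q → List A → Option M.Q
  | q, [] => some q
  | q, a :: w => (M.δ q a).bind fun q' => run q' w

/-- The regular language accepted by `M`. -/
def Lang : Set (List A) := {w | (M.run M.init w).isSome}

lemma run_append (q : M.Q) (u w : List A) :
    M.run q (u ++ w) = (M.run q u).bind fun q' => M.run q' w := by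
  induction u generalizing q with
  | nil => simp [run]
  | cons a u ih =>
    simp only [List.cons_append, run]
    cases M.δ q a with
    | none => simp
    | some q' => simp [ih]

lemma isSome_of_append {q : M.Q} {u w : List A}
    (h : (M.run q (u ++ w)).isSome) : (M.run q u).isSome := by
  rw [run_append] at h
  cases hu : M.run q u with
  | none => rw [hu] at h; simp at h
  | some q' => simp

/-- The path language tree of `M`: the tree whose vertices are the words of the
language of `M`, with an edge from `w` to `w ++ [a]` whenever both belong to the
language. -/
def pathTree : RGraph where
  V := {w : List A // (M.run M.init w).isSome}
  E := {x : List A × A // (M.run M.init (x.1 ++ [x.2])).isSome}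
  s := fun x => ⟨x.1.1, M.isSome_of_append x.2⟩
  t := fun x => ⟨x.1.1 ++ [x.1.2], x.2⟩
  root := ⟨[], by simp [run]⟩

/-- The underlying rooted directed multigraph of the automaton `M`. -/
def underlying : RGraph where
  V := M.Q
  E := {x : M.Q × A // (M.δ x.1 x.2).isSome}
  s := fun x => x.1.1
  t := fun x => (M.δ x.1.1 x.1.2).get x.2
  root := M.init

/-- `M` is geometrically minimal: it has the minimal number of states among all DFAs
(over arbitrary finite nonempty alphabets) whose path language trees are isomorphic,
as unlabelled rooted trees, to the path language tree of `M`. -/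
def GeomMinimal : Prop :=
  ∀ (B : Type), Finite B → Nonempty B → ∀ N : PDFA B,
    RGraph.Iso M.pathTree N.pathTree → Nat.card M.Q ≤ Nat.card N.Q

/-- The state reached after reading the word `w` of the language. -/
def qstate (w : List A) (h : (M.run M.init w).isSome) : M.Q :=
  (M.run M.init w).get h

/-- The group of admissible permutations at the state `q`: permutations `τ` of the
alphabet fixing the letters outside `Σ(q)` and satisfying `δ(q, τ a) = δ(q, a)`. -/
def SymQ (q : M.Q) : Subgroup (Equiv.Perm A) where
  carrier := {τ | ∀ a, M.δ q (τ a) = M.δ q a ∧ (M.δ q a = none → τ a = a)}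
  one_mem' := fun _ => ⟨rfl, fun _ => rfl⟩
  mul_mem' := by
    intro τ₁ τ₂ h1 h2 a
    constructor
    · show M.δ q (τ₁ (τ₂ a)) = M.δ q a
      rw [(h1 (τ₂ a)).1, (h2 a).1]
    · intro hn
      show τ₁ (τ₂ a) = a
      rw [(h2 a).2 hn, (h1 a).2 hn]
  inv_mem' := by
    intro τ h a
    have h1 := (h (τ.symm a)).1
    rw [Equiv.apply_symm_apply] at h1
    constructor
    · show M.δ q (τ.symm a) = M.δ q a
      exact h1.symm
    · intro hn
      have h2 := (h (τ.symm a)).2 (h1.symm.trans hn)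
      rw [Equiv.apply_symm_apply] at h2
      show τ.symm a = a
      exact h2.symm

end PDFA

/-- Extending a portrait to a map on words (the first argument is the accumulated
prefix): the `i`-th letter of the image word is the image of the `i`-th letter under
the local injection at the prefix of length `i - 1`. -/
def portraitExtend {A : Type} (σ : List A → A → A) : List A → List A → List A
  | _, [] => []
  | pre, a :: w => σ pre a :: portraitExtend σ (pre ++ [a]) w

lemma RGraph.pathFrom_cons_iff {A : RGraph} {q : A.V} {a : A.E} {l : List A.E} :
    A.PathFrom q (a :: l) ↔ A.s a = q ∧ A.PathFrom (A.t a) l := by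
  constructor
  · rintro ⟨h1, h2⟩
    rw [RGraph.IsPath, List.Chain', List.isChain_cons] at h1
    exact ⟨h2 a (by simp), h1.2, fun e he => (h1.1 e he).symm⟩
  · rintro ⟨h1, h2, h3⟩
    refine ⟨?_, ?_⟩
    · rw [RGraph.IsPath, List.Chain', List.isChain_cons]
      exact ⟨fun e he => (h3 e he).symm, h2⟩
    · intro e he; simp at he; subst he; exact h1

lemma RGraph.pathFrom_singleton {A : RGraph} {q : A.V} {a : A.E} (h : A.s a = q) :
    A.PathFrom q [a] :=
  RGraph.pathFrom_cons_iff.mpr ⟨h, A.pathFrom_nil _⟩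

/-- Covering criterion. If `A'` is connected, then a morphism
`p : A → A'` is a covering morphism if and only if the edge map restricts to a
bijection `q⁺ → p₀(q)⁺` for every vertex `q` of `A`. -/
theorem stmt1 {A B : RGraph} (p : GraphHom A B) (hB : B.Connected) :
    p.IsCovering ↔ ∀ q : A.V, Function.Bijective (p.outMap q) := by
  constructor
  · rintro ⟨hsurj, hlift⟩ q
    constructor
    · rintro ⟨e1, he1⟩ ⟨e2, he2⟩ h
      have hpe : p.e e1 = p.e e2 := congrArg Subtype.val h
      have hpath : B.PathFrom (p.v q) [p.e e1] :=
        RGraph.pathFrom_singleton (by rw [p.s_eq, he1])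
      obtain ⟨l, _, huniq⟩ := hlift q [p.e e1] hpath
      have h1 : l = [e1] := (huniq [e1] ⟨RGraph.pathFrom_singleton he1, by simp⟩).symm
      have h2 : l = [e2] :=
        (huniq [e2] ⟨RGraph.pathFrom_singleton he2, by simp [hpe]⟩).symm
      apply Subtype.ext
      have := h1.symm.trans h2
      simpa using this
    · rintro ⟨e', he'⟩
      have hpath : B.PathFrom (p.v q) [e'] := RGraph.pathFrom_singleton he'
      obtain ⟨l, ⟨hlp, hlm⟩, _⟩ := hlift q [e'] hpath
      cases l with
      | nil => simp at hlm
      | cons f m =>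
        simp at hlm
        obtain ⟨hfe, hm⟩ := hlm
        subst hm
        rw [RGraph.pathFrom_cons_iff] at hlp
        exact ⟨⟨f, hlp.1⟩, Subtype.ext hfe⟩
  · intro h
    have huplp : p.UPLP := by
      intro q l'
      induction l' generalizing q with
      | nil =>
        intro _
        exact ⟨[], ⟨A.pathFrom_nil q, rfl⟩, by rintro l ⟨_, hm⟩; simpa using hm⟩
      | cons a l' ih =>
        intro hp
        rw [RGraph.pathFrom_cons_iff] at hp
        obtain ⟨ha, hl'⟩ := hp
        obtain ⟨⟨e, hes⟩, hee⟩ := (h q).2 ⟨a, ha⟩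
        have hpe : p.e e = a := congrArg Subtype.val hee
        have hta : B.t a = p.v (A.t e) := by rw [← hpe, p.t_eq]
        rw [hta] at hl'
        obtain ⟨m, ⟨hm1, hm2⟩, hmu⟩ := ih (A.t e) hl'
        refine ⟨e :: m, ⟨RGraph.pathFrom_cons_iff.mpr ⟨hes, hm1⟩, by simp [hpe, hm2]⟩, ?_⟩
        rintro l ⟨hlp, hlm⟩
        cases l with
        | nil => simp at hlm
        | cons f m' =>
          simp at hlm
          obtain ⟨hfa, hm'⟩ := hlm
          rw [RGraph.pathFrom_cons_iff] at hlp
          have hfe : f = e := by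
            have := (h q).1 (a₁ := ⟨f, hlp.1⟩) (a₂ := ⟨e, hes⟩)
              (Subtype.ext (show p.e f = p.e e by rw [hfa, hpe]))
            exact congrArg Subtype.val this
          subst hfe
          rw [hmu m' ⟨hlp.2, hm'⟩]
    refine ⟨?_, huplp⟩
    intro w
    obtain ⟨l', hl', ht⟩ := hB w
    rw [← p.root_eq] at hl'
    obtain ⟨l, ⟨hlp, hlm⟩, _⟩ := huplp A.root l' hl'
    refine ⟨A.pathTarget A.root l, ?_⟩
    rw [← p.pathTarget_map, hlm, p.root_eq, ht]
end

section
/- Let A be a connected graph, let A' be a tree, and let p : A → A' be a covering morphism. Then p is an isomorphism. -/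
/-- If `A` is connected and `A'` is a tree, then any covering
morphism `p : A → A'` is an isomorphism. -/
theorem stmt3 {A B : RGraph} (hA : A.Connected) (hB : B.IsTree)
    (p : GraphHom A B) (hp : p.IsCovering) :
    p.IsIso := by
  obtain ⟨hsurj, hlift⟩ := hp
  have hvinj : Function.Injective p.v := by
    intro q1 q2 h
    obtain ⟨l1, hl1, ht1⟩ := hA q1
    obtain ⟨l2, hl2, ht2⟩ := hA q2
    have hm1 : B.PathFrom B.root (l1.map p.e) := by
      have := p.pathFrom_map hl1; rwa [p.root_eq] at this
    have hm2 : B.PathFrom B.root (l2.map p.e) := by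
      have := p.pathFrom_map hl2; rwa [p.root_eq] at this
    have htm : B.pathTarget B.root (l1.map p.e) = B.pathTarget B.root (l2.map p.e) := by
      rw [← p.root_eq, p.pathTarget_map, p.pathTarget_map, ht1, ht2, h]
    have heq : (⟨l1.map p.e, hm1⟩ : {l // B.PathFrom B.root l}) = ⟨l2.map p.e, hm2⟩ :=
      hB.1 htm
    have hle : l1.map p.e = l2.map p.e := congrArg Subtype.val heq
    obtain ⟨l, -, hu⟩ := hlift A.root (l1.map p.e) (by rw [p.root_eq]; exact hm1)
    have e1 := hu l1 ⟨hl1, rfl⟩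
    have e2 := hu l2 ⟨hl2, hle.symm⟩
    rw [← ht1, ← ht2, e1, e2]
  have heinj : Function.Injective p.e := by
    intro e1 e2 h
    have hs : A.s e1 = A.s e2 := hvinj (by rw [← p.s_eq, ← p.s_eq, h])
    have hpf : B.PathFrom (p.v (A.s e1)) [p.e e1] := by
      refine ⟨List.isChain_singleton _, ?_⟩
      intro f hf; simp at hf; subst hf; rw [p.s_eq]
    obtain ⟨l, -, hu⟩ := hlift (A.s e1) [p.e e1] hpf
    have h1 := hu [e1] ⟨⟨List.isChain_singleton _, by simp⟩, by simp⟩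
    have h2 := hu [e2] ⟨⟨List.isChain_singleton _, by
      intro f hf; simp at hf; subst hf; exact hs.symm⟩, by simp [h]⟩
    have : [e1] = [e2] := h1.trans h2.symm
    simpa using this
  have hesurj : Function.Surjective p.e := by
    intro e'
    obtain ⟨⟨l', hl'⟩, ht'⟩ := hB.2 (B.s e')
    have hpf : B.PathFrom B.root (l' ++ [e']) :=
      RGraph.pathFrom_append_single hl' ht'.symm
    obtain ⟨l, ⟨hlp, hlm⟩, -⟩ := hlift A.root (l' ++ [e'])
      (by rw [p.root_eq]; exact hpf)
    rcases List.eq_nil_or_concat l with rfl | ⟨l0, e, rfl⟩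
    · simp at hlm
    · refine ⟨e, ?_⟩
      have := congrArg List.getLast? hlm
      simpa [List.getLast?_concat, List.concat_eq_append, List.map_append] using this
  exact ⟨⟨hvinj, hsurj⟩, heinj, hesurj⟩
end

section
/- Let T be a self-similar tree. Then the following are equivalent: (i) some covering quotient of T contains a recurrent double edge; (ii) a minimal covering quotient of T contains a recurrent double edge; (iii) Aut(T) is infinite; (iv) Aut(T) is uncountable. Consequently, the cardinality of Aut(T) is either finite or equal to the cardinality of the continuum. -/
namespace StmtAux
open RGraph

/-! ### Basic path lemmas -/

lemma pathFrom_cons {A : RGraph} {q : A.V} {e : A.E} {l : List A.E} :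
    A.PathFrom q (e :: l) ↔ A.s e = q ∧ A.PathFrom (A.t e) l := by
  constructor
  · rintro ⟨hc, hh⟩
    have hc2 := List.isChain_cons.mp hc
    exact ⟨hh e (by simp), hc2.2, fun f hf => (hc2.1 f hf).symm⟩
  · rintro ⟨he, hc, hh⟩
    exact ⟨List.isChain_cons.mpr ⟨fun f hf => (hh f hf).symm, hc⟩,
      fun f hf => by simp at hf; subst hf; exact he⟩

lemma pathFrom_append' {A : RGraph} {q : A.V} {l l' : List A.E} :
    A.PathFrom q (l ++ l') ↔ A.PathFrom q l ∧ A.PathFrom (A.pathTarget q l) l' := by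
  induction l generalizing q with
  | nil => simp [A.pathFrom_nil q]
  | cons e l ih =>
    simp only [List.cons_append, pathFrom_cons, ih, pathTarget_cons, and_assoc]

lemma pathFrom_single {A : RGraph} {q : A.V} {e : A.E} :
    A.PathFrom q [e] ↔ A.s e = q := by
  simp [pathFrom_cons, A.pathFrom_nil]

/-! ### Trees: root paths -/

variable {T : RGraph}

/-- The unique path from the root to `v`. -/
noncomputable def rp (hU : T.IsTree) (v : T.V) : {l : List T.E // T.PathFrom T.root l} :=
  (Equiv.ofBijective _ hU).symm v

lemma rp_target (hU : T.IsTree) (v : T.V) :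
    T.pathTarget T.root (rp hU v).1 = v :=
  (Equiv.ofBijective _ hU).apply_symm_apply v

lemma rp_unique (hU : T.IsTree) {v : T.V} (l : List T.E) (h : T.PathFrom T.root l)
    (ht : T.pathTarget T.root l = v) : rp hU v = ⟨l, h⟩ :=
  ((Equiv.ofBijective _ hU).symm_apply_eq).mpr ht.symm

lemma rp_inj (hU : T.IsTree) {v w : T.V} (h : (rp hU v).1 = (rp hU w).1) : v = w := by
  rw [← rp_target hU v, ← rp_target hU w, h]

lemma rp_app (hU : T.IsTree) {v : T.V} {l : List T.E} (h : T.PathFrom v l) :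
    (rp hU (T.pathTarget v l)).1 = (rp hU v).1 ++ l := by
  have hp : T.PathFrom T.root ((rp hU v).1 ++ l) :=
    pathFrom_append'.mpr ⟨(rp hU v).2, by rw [rp_target]; exact h⟩
  rw [rp_unique hU _ hp (by rw [pathTarget_append, rp_target])]

lemma rp_root (hU : T.IsTree) : (rp hU T.root).1 = [] := by
  rw [rp_unique hU [] (T.pathFrom_nil _) (T.pathTarget_nil T.root)]

lemma rp_t (hU : T.IsTree) (e : T.E) :
    (rp hU (T.t e)).1 = (rp hU (T.s e)).1 ++ [e] := by
  have h : T.PathFrom (T.s e) [e] := pathFrom_single.mpr rfl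
  have := rp_app hU h
  simpa using this

lemma adj_iff_rp (hU : T.IsTree) (v w : T.V) :
    T.Adj v w ↔ ∃ e, (rp hU w).1 = (rp hU v).1 ++ [e] := by
  constructor
  · rintro ⟨e, hs, ht⟩; exact ⟨e, by rw [← hs, ← ht, rp_t]⟩
  · rintro ⟨e, he⟩
    have h2 : T.PathFrom T.root ((rp hU v).1 ++ [e]) := he ▸ (rp hU w).2
    have h3 := (pathFrom_append'.mp h2).2
    rw [rp_target] at h3
    refine ⟨e, pathFrom_single.mp h3, ?_⟩
    rw [← rp_target hU w, he]
    simp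

lemma t_inj_of_s_eq (hU : T.IsTree) {e f : T.E} (hs : T.s e = T.s f)
    (ht : T.t e = T.t f) : e = f := by
  have h1 := rp_t hU e
  have h2 := rp_t hU f
  rw [ht, hs, h2] at h1
  have := List.append_cancel_left h1.symm
  simpa using this

/-- The depth of a vertex: the length of the root path. -/
noncomputable def depth (hU : T.IsTree) (v : T.V) : ℕ := (rp hU v).1.length

lemma depth_root (hU : T.IsTree) : depth hU T.root = 0 := by
  simp [depth, rp_root]

lemma depth_t (hU : T.IsTree) (e : T.E) :
    depth hU (T.t e) = depth hU (T.s e) + 1 := by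
  simp [depth, rp_t hU e]

lemma not_t_root (hU : T.IsTree) (e : T.E) : T.t e ≠ T.root := by
  intro h
  have := rp_t hU e
  rw [h, rp_root] at this
  exact absurd this.symm (by simp)

/-! ### Local finiteness: balls are finite -/

lemma finite_paths (hLF : T.LocallyFinite) :
    ∀ (n : ℕ) (q : T.V), Finite {l : List T.E // T.PathFrom q l ∧ l.length = n} := by
  intro n
  induction n with
  | zero =>
    intro q
    have : Subsingleton {l : List T.E // T.PathFrom q l ∧ l.length = 0} := by
      constructor
      rintro ⟨a, _, ha⟩ ⟨b, _, hb⟩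
      apply Subtype.ext
      simp only [List.length_eq_zero_iff] at ha hb
      show a = b
      rw [ha, hb]
    exact Finite.of_subsingleton
  | succ n ih =>
    intro q
    haveI := hLF q
    haveI : ∀ e : {e : T.E // T.s e = q},
        Finite {l : List T.E // T.PathFrom (T.t e.1) l ∧ l.length = n} := fun e => ih _
    apply Finite.of_surjective
      (f := fun (x : Σ e : {e : T.E // T.s e = q},
          {l : List T.E // T.PathFrom (T.t e.1) l ∧ l.length = n}) =>
        (⟨x.1.1 :: x.2.1, pathFrom_cons.mpr ⟨x.1.2, x.2.2.1⟩, by simp [x.2.2.2]⟩ :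
          {l : List T.E // T.PathFrom q l ∧ l.length = n + 1}))
    rintro ⟨l, hl, hlen⟩
    cases l with
    | nil => simp at hlen
    | cons e m =>
      refine ⟨⟨⟨e, (pathFrom_cons.mp hl).1⟩, ⟨m, (pathFrom_cons.mp hl).2, by simpa using hlen⟩⟩, ?_⟩
      rfl

lemma finite_ball (hU : T.IsTree) (hLF : T.LocallyFinite) (N : ℕ) :
    {v : T.V | depth hU v ≤ N}.Finite := by
  haveI : Finite {l : List T.E // T.PathFrom T.root l ∧ l.length ≤ N} := by
    haveI : ∀ n : Fin (N + 1), Finite {l : List T.E // T.PathFrom T.root l ∧ l.length = n.1} :=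
      fun n => finite_paths hLF n.1 T.root
    apply Finite.of_surjective
      (f := fun (x : Σ n : Fin (N + 1),
          {l : List T.E // T.PathFrom T.root l ∧ l.length = n.1}) =>
        (⟨x.2.1, x.2.2.1, by have := x.2.2.2; have := x.1.2; omega⟩ :
          {l : List T.E // T.PathFrom T.root l ∧ l.length ≤ N}))
    rintro ⟨l, hl, hlen⟩
    exact ⟨⟨⟨l.length, by omega⟩, ⟨l, hl, rfl⟩⟩, rfl⟩
  haveI : Finite ↥{v : T.V | depth hU v ≤ N} := by
    apply Finite.of_injective
      (f := fun v => (⟨(rp hU v.1).1, (rp hU v.1).2, v.2⟩ :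
        {l : List T.E // T.PathFrom T.root l ∧ l.length ≤ N}))
    intro a b h
    simp only [Subtype.mk.injEq] at h
    exact Subtype.ext (rp_inj hU h)
  exact Set.toFinite _

lemma exists_deep (hU : T.IsTree) (hLF : T.LocallyFinite) {S : Set T.V}
    (hS : S.Infinite) (N : ℕ) : ∃ v ∈ S, N ≤ depth hU v := by
  by_contra h
  push_neg at h
  exact hS (((finite_ball hU hLF N)).subset fun v hv => le_of_lt (h v hv))

/-! ### Coherent equivalences between path sets (cone types) -/

/-- The set of paths emanating from `v`. -/
abbrev Paths (T : RGraph) (v : T.V) := {l : List T.E // T.PathFrom v l}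

/-- A map between path sets is coherent if it commutes with extension by one edge. -/
def Coherent {T : RGraph} {v w : T.V} (F : Paths T v → Paths T w) : Prop :=
  ∀ (l : List T.E) (hl : T.PathFrom v l) (e : T.E) (h : T.PathFrom v (l ++ [e])),
    ∃ e', (F ⟨l ++ [e], h⟩).1 = (F ⟨l, hl⟩).1 ++ [e']

/-- Two vertices have the same cone type: there is a coherent bijection between
the sets of paths emanating from them. -/
def ConeEquiv (T : RGraph) (v w : T.V) : Prop :=
  ∃ F : Paths T v ≃ Paths T w, Coherent ⇑F

lemma coh_len {T : RGraph} {v w : T.V} {F : Paths T v ≃ Paths T w} (hF : Coherent ⇑F) :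
    ∀ (l : List T.E) (hl : T.PathFrom v l),
      (F ⟨l, hl⟩).1.length = (F ⟨[], T.pathFrom_nil v⟩).1.length + l.length := by
  intro l
  induction l using List.reverseRecOn with
  | nil => intro hl; simp
  | append_singleton m e ih =>
    intro hl
    have hm : T.PathFrom v m := (pathFrom_append'.mp hl).1
    obtain ⟨e', he'⟩ := hF m hm e hl
    rw [he']
    simp only [List.length_append, List.length_singleton, ih hm]
    omega

lemma coh_nil {T : RGraph} {v w : T.V} {F : Paths T v ≃ Paths T w} (hF : Coherent ⇑F) :
    (F ⟨[], T.pathFrom_nil v⟩).1 = [] := by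
  obtain ⟨l, hl⟩ := F.surjective ⟨[], T.pathFrom_nil w⟩
  have h2 := coh_len hF l.1 l.2
  rw [show (⟨l.1, l.2⟩ : Paths T v) = l from rfl, hl] at h2
  have h2' : 0 = (F ⟨[], T.pathFrom_nil v⟩).1.length + l.1.length := h2
  exact List.length_eq_zero_iff.mp (by omega)

lemma coh_len' {T : RGraph} {v w : T.V} {F : Paths T v ≃ Paths T w} (hF : Coherent ⇑F)
    (l : Paths T v) : (F l).1.length = l.1.length := by
  have h2 := coh_len hF l.1 l.2
  rw [show (⟨l.1, l.2⟩ : Paths T v) = l from rfl] at h2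
  rw [h2, coh_nil hF]
  simp

lemma coh_prefix {T : RGraph} {v w : T.V} {F : Paths T v ≃ Paths T w} (hF : Coherent ⇑F)
    (m : Paths T v) : ∀ (l : List T.E) (hl : T.PathFrom v l), m.1 <+: l →
      (F m).1 <+: (F ⟨l, hl⟩).1 := by
  intro l
  induction l using List.reverseRecOn with
  | nil =>
    intro hl hpre
    have hm : m = ⟨[], T.pathFrom_nil v⟩ := Subtype.ext (List.prefix_nil.mp hpre)
    rw [hm]
  | append_singleton m' e ih =>
    intro hl hpre
    obtain ⟨r, hr⟩ := hpre
    rcases List.eq_nil_or_concat r with hr0 | ⟨r₀, x, hrx⟩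
    · subst hr0
      have hm : m = ⟨m' ++ [e], hl⟩ := Subtype.ext (by simpa using hr)
      rw [hm]
    · subst hrx
      rw [List.concat_eq_append, ← List.append_assoc] at hr
      obtain ⟨h1, _⟩ := List.append_inj' hr rfl
      have hm' : T.PathFrom v m' := (pathFrom_append'.mp hl).1
      obtain ⟨e', he'⟩ := hF m' hm' e hl
      rw [he']
      exact (ih hm' ⟨r₀, h1⟩).trans (List.prefix_append _ _)

lemma coh_symm {T : RGraph} {v w : T.V} {F : Paths T v ≃ Paths T w} (hF : Coherent ⇑F) :
    Coherent ⇑F.symm := by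
  intro l hl e h
  set m := F.symm ⟨l ++ [e], h⟩ with hm_def
  have hFm : F m = ⟨l ++ [e], h⟩ := F.apply_symm_apply _
  have hlen : m.1.length = l.length + 1 := by
    have h2 := coh_len' hF m
    rw [hFm] at h2
    simpa using h2.symm
  rcases List.eq_nil_or_concat m.1 with h0 | ⟨m₀, f, hm⟩
  · rw [h0] at hlen; simp at hlen
  · rw [List.concat_eq_append] at hm
    have hm₀ : T.PathFrom v m₀ := (pathFrom_append'.mp (hm ▸ m.2)).1
    obtain ⟨f', hf'⟩ := hF m₀ hm₀ f (hm ▸ m.2)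
    have hmm : (⟨m₀ ++ [f], hm ▸ m.2⟩ : Paths T v) = m := Subtype.ext hm.symm
    rw [hmm, hFm] at hf'
    obtain ⟨h1, _⟩ := List.append_inj' hf'.symm rfl
    have h3 : F ⟨m₀, hm₀⟩ = ⟨l, hl⟩ := Subtype.ext h1
    have h4 : F.symm ⟨l, hl⟩ = ⟨m₀, hm₀⟩ := by rw [← h3, F.symm_apply_apply]
    exact ⟨f, by rw [h4]; exact hm⟩

lemma coneEquiv_refl (T : RGraph) (v : T.V) : ConeEquiv T v v :=
  ⟨Equiv.refl _, fun l hl e h => ⟨e, rfl⟩⟩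

lemma coneEquiv_symm {T : RGraph} {v w : T.V} (h : ConeEquiv T v w) : ConeEquiv T w v := by
  obtain ⟨F, hF⟩ := h
  exact ⟨F.symm, coh_symm hF⟩

lemma coneEquiv_trans {T : RGraph} {u v w : T.V} (h1 : ConeEquiv T u v)
    (h2 : ConeEquiv T v w) : ConeEquiv T u w := by
  obtain ⟨F, hF⟩ := h1
  obtain ⟨G, hG⟩ := h2
  refine ⟨F.trans G, ?_⟩
  intro l hl e h
  obtain ⟨e₁, he₁⟩ := hF l hl e h
  have hp : T.PathFrom v ((F ⟨l, hl⟩).1 ++ [e₁]) := he₁ ▸ (F ⟨l ++ [e], h⟩).2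
  obtain ⟨e₂, he₂⟩ := hG (F ⟨l, hl⟩).1 (F ⟨l, hl⟩).2 e₁ hp
  refine ⟨e₂, ?_⟩
  show (G (F ⟨l ++ [e], h⟩)).1 = (G (F ⟨l, hl⟩)).1 ++ [e₂]
  have hc : F ⟨l ++ [e], h⟩ = ⟨(F ⟨l, hl⟩).1 ++ [e₁], hp⟩ := Subtype.ext he₁
  rw [hc]
  exact he₂

/-- Shifting a coherent equivalence along an edge. -/
lemma coneEquiv_shift {T : RGraph} {v w : T.V} (F : Paths T v ≃ Paths T w)
    (hF : Coherent ⇑F) {e e' : T.E} (he : T.s e = v)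
    (h1 : (F ⟨[e], pathFrom_single.mpr he⟩).1 = [e']) :
    ConeEquiv T (T.t e) (T.t e') := by
  have hse' : T.s e' = w := by
    have h2 := (F ⟨[e], pathFrom_single.mpr he⟩).2
    rw [h1] at h2
    exact pathFrom_single.mp h2
  have key : ∀ (l : List T.E) (hl : T.PathFrom (T.t e) l),
      ∃ (r : List T.E), T.PathFrom (T.t e') r ∧
        (F ⟨e :: l, pathFrom_cons.mpr ⟨he, hl⟩⟩).1 = e' :: r := by
    intro l hl
    have hpre : ([e] : List T.E) <+: e :: l := ⟨l, rfl⟩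
    have h2 := coh_prefix hF ⟨[e], pathFrom_single.mpr he⟩ (e :: l)
      (pathFrom_cons.mpr ⟨he, hl⟩) hpre
    rw [h1] at h2
    obtain ⟨r, hr⟩ := h2
    have hpath := (F ⟨e :: l, pathFrom_cons.mpr ⟨he, hl⟩⟩).2
    rw [← hr] at hpath
    exact ⟨r, (pathFrom_cons.mp hpath).2, hr.symm⟩
  have h1' : (F.symm ⟨[e'], pathFrom_single.mpr hse'⟩).1 = [e] := by
    have hc : F ⟨[e], pathFrom_single.mpr he⟩ = ⟨[e'], pathFrom_single.mpr hse'⟩ :=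
      Subtype.ext h1
    rw [← hc, F.symm_apply_apply]
  have key' : ∀ (l : List T.E) (hl : T.PathFrom (T.t e') l),
      ∃ (r : List T.E), T.PathFrom (T.t e) r ∧
        (F.symm ⟨e' :: l, pathFrom_cons.mpr ⟨hse', hl⟩⟩).1 = e :: r := by
    intro l hl
    have hpre : ([e'] : List T.E) <+: e' :: l := ⟨l, rfl⟩
    have h2 := coh_prefix (coh_symm hF) ⟨[e'], pathFrom_single.mpr hse'⟩ (e' :: l)
      (pathFrom_cons.mpr ⟨hse', hl⟩) hpre
    rw [h1'] at h2
    obtain ⟨r, hr⟩ := h2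
    have hpath := (F.symm ⟨e' :: l, pathFrom_cons.mpr ⟨hse', hl⟩⟩).2
    rw [← hr] at hpath
    exact ⟨r, (pathFrom_cons.mp hpath).2, hr.symm⟩
  let G : Paths T (T.t e) → Paths T (T.t e') := fun l =>
    ⟨(F ⟨e :: l.1, pathFrom_cons.mpr ⟨he, l.2⟩⟩).1.tail, by
      obtain ⟨r, hr, hval⟩ := key l.1 l.2
      rw [hval]
      exact hr⟩
  let G' : Paths T (T.t e') → Paths T (T.t e) := fun l =>
    ⟨(F.symm ⟨e' :: l.1, pathFrom_cons.mpr ⟨hse', l.2⟩⟩).1.tail, by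
      obtain ⟨r, hr, hval⟩ := key' l.1 l.2
      rw [hval]
      exact hr⟩
  have Gspec : ∀ l : Paths T (T.t e),
      (F ⟨e :: l.1, pathFrom_cons.mpr ⟨he, l.2⟩⟩).1 = e' :: (G l).1 := by
    intro l
    obtain ⟨r, hr, hval⟩ := key l.1 l.2
    show _ = e' :: (F ⟨e :: l.1, pathFrom_cons.mpr ⟨he, l.2⟩⟩).1.tail
    rw [hval, List.tail_cons]
  have G'spec : ∀ l : Paths T (T.t e'),
      (F.symm ⟨e' :: l.1, pathFrom_cons.mpr ⟨hse', l.2⟩⟩).1 = e :: (G' l).1 := by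
    intro l
    obtain ⟨r, hr, hval⟩ := key' l.1 l.2
    show _ = e :: (F.symm ⟨e' :: l.1, pathFrom_cons.mpr ⟨hse', l.2⟩⟩).1.tail
    rw [hval, List.tail_cons]
  have hleft : ∀ l, G' (G l) = l := by
    intro l
    have hs := G'spec (G l)
    have hc : (⟨e' :: (G l).1, pathFrom_cons.mpr ⟨hse', (G l).2⟩⟩ : Paths T w)
        = F ⟨e :: l.1, pathFrom_cons.mpr ⟨he, l.2⟩⟩ := Subtype.ext (Gspec l).symm
    rw [hc, F.symm_apply_apply] at hs
    apply Subtype.ext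
    have h5 : e :: l.1 = e :: (G' (G l)).1 := hs
    simpa using h5.symm
  have hright : ∀ l, G (G' l) = l := by
    intro l
    have hs := Gspec (G' l)
    have hc : (⟨e :: (G' l).1, pathFrom_cons.mpr ⟨he, (G' l).2⟩⟩ : Paths T v)
        = F.symm ⟨e' :: l.1, pathFrom_cons.mpr ⟨hse', l.2⟩⟩ := Subtype.ext (G'spec l).symm
    rw [hc, F.apply_symm_apply] at hs
    apply Subtype.ext
    have h5 : e' :: l.1 = e' :: (G (G' l)).1 := hs
    simpa using h5.symm
  refine ⟨⟨G, G', hleft, hright⟩, ?_⟩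
  intro l hl f h
  have h' : T.PathFrom v ((e :: l) ++ [f]) := pathFrom_cons.mpr ⟨he, h⟩
  obtain ⟨f', hf'⟩ := hF (e :: l) (pathFrom_cons.mpr ⟨he, hl⟩) f h'
  have h6 : e' :: (G ⟨l ++ [f], h⟩).1 = (F ⟨e :: l, pathFrom_cons.mpr ⟨he, hl⟩⟩).1 ++ [f'] :=
    (Gspec ⟨l ++ [f], h⟩).symm.trans hf'
  rw [Gspec ⟨l, hl⟩] at h6
  have h7 : e' :: (G ⟨l ++ [f], h⟩).1 = e' :: ((G ⟨l, hl⟩).1 ++ [f']) := h6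
  have h8 : (G ⟨l ++ [f], h⟩).1 = (G ⟨l, hl⟩).1 ++ [f'] := by simpa using h7
  exact ⟨f', h8⟩


/-! ### Automorphisms act on root paths -/

lemma aut_rp {T : RGraph} (hU : T.IsTree) {g : Equiv.Perm T.V} (hg : g ∈ T.autGroup) {v : T.V} :
    ∀ (l : List T.E) (hl : T.PathFrom v l),
      ∃ (l' : List T.E), T.PathFrom (g v) l' ∧ l'.length = l.length ∧
        (rp hU (g (T.pathTarget v l))).1 = (rp hU (g v)).1 ++ l' := by
  intro l
  induction l using List.reverseRecOn with
  | nil => intro hl; exact ⟨[], T.pathFrom_nil _, rfl, by simp⟩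
  | append_singleton m e ih =>
    intro hl
    have hm : T.PathFrom v m := (pathFrom_append'.mp hl).1
    obtain ⟨l', h', hlen, hrp⟩ := ih hm
    have hse : T.s e = T.pathTarget v m := pathFrom_single.mp (pathFrom_append'.mp hl).2
    have hadj : T.Adj (T.pathTarget v m) (T.pathTarget v (m ++ [e])) :=
      ⟨e, hse, (T.pathTarget_append_single v m e).symm⟩
    have hadj2 := (hg.2 _ _).mp hadj
    obtain ⟨f, hf⟩ := (adj_iff_rp hU _ _).mp hadj2
    refine ⟨l' ++ [f], ?_, by simp [hlen], ?_⟩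
    · have hroot : T.PathFrom T.root ((rp hU (g v)).1 ++ (l' ++ [f])) := by
        rw [← List.append_assoc, ← hrp, ← hf]
        exact (rp hU _).2
      have h3 := (pathFrom_append'.mp hroot).2
      rwa [rp_target] at h3
    · rw [hf, hrp, List.append_assoc]

lemma depth_aut {T : RGraph} (hU : T.IsTree) {g : Equiv.Perm T.V} (hg : g ∈ T.autGroup)
    (v : T.V) : depth hU (g v) = depth hU v := by
  obtain ⟨l', h', hlen, hrp⟩ := aut_rp hU hg (v := T.root) (rp hU v).1 (rp hU v).2
  rw [rp_target] at hrp
  rw [hg.1, rp_root] at hrp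
  show (rp hU (g v)).1.length = (rp hU v).1.length
  rw [hrp]
  simpa using hlen

lemma aut_coneEquiv {T : RGraph} (hU : T.IsTree) {g : Equiv.Perm T.V} (hg : g ∈ T.autGroup)
    (v : T.V) : ConeEquiv T v (g v) := by
  classical
  have key := fun (l : Paths T v) => aut_rp hU hg l.1 l.2
  choose f hf hlen hrp using key
  have hginv := T.autGroup.inv_mem hg
  set F : Paths T v → Paths T (g v) := fun l => ⟨f l, hf l⟩ with hFdef
  have hFspec : ∀ l : Paths T v,
      (rp hU (g (T.pathTarget v l.1))).1 = (rp hU (g v)).1 ++ (F l).1 := fun l => hrp l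
  have hinj : Function.Injective F := by
    intro a b hab
    have h1 : (rp hU (g (T.pathTarget v a.1))).1 = (rp hU (g (T.pathTarget v b.1))).1 := by
      rw [hFspec a, hFspec b, hab]
    have h2 : g (T.pathTarget v a.1) = g (T.pathTarget v b.1) := rp_inj hU h1
    have h3 : T.pathTarget v a.1 = T.pathTarget v b.1 := g.injective h2
    have h4 : (rp hU v).1 ++ a.1 = (rp hU v).1 ++ b.1 := by
      rw [← rp_app hU a.2, ← rp_app hU b.2, h3]
    exact Subtype.ext (List.append_cancel_left h4)
  have hsurj : Function.Surjective F := by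
    intro m
    obtain ⟨n, hn, hnlen, hnrp⟩ := aut_rp hU hginv (v := g v) m.1 m.2
    rw [show g⁻¹ (g v) = v from g.symm_apply_apply v] at hn hnrp
    refine ⟨⟨n, hn⟩, ?_⟩
    set y := T.pathTarget (g v) m.1 with hy
    have hz : T.pathTarget v n = g⁻¹ y := by
      apply rp_inj hU
      rw [rp_app hU hn, hnrp]
    have hgz : g (T.pathTarget v n) = y := by rw [hz]; exact g.apply_symm_apply y
    have h5 := hFspec ⟨n, hn⟩
    rw [hgz] at h5
    have h6 : (rp hU y).1 = (rp hU (g v)).1 ++ m.1 := rp_app hU m.2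
    rw [h6] at h5
    exact Subtype.ext (List.append_cancel_left h5.symm)
  refine ⟨Equiv.ofBijective F ⟨hinj, hsurj⟩, ?_⟩
  intro l hl e h
  have hse : T.s e = T.pathTarget v l := pathFrom_single.mp (pathFrom_append'.mp h).2
  have hadj : T.Adj (T.pathTarget v l) (T.pathTarget v (l ++ [e])) :=
    ⟨e, hse, (T.pathTarget_append_single v l e).symm⟩
  obtain ⟨f', hf'⟩ := (adj_iff_rp hU _ _).mp ((hg.2 _ _).mp hadj)
  refine ⟨f', ?_⟩
  show (F ⟨l ++ [e], h⟩).1 = (F ⟨l, hl⟩).1 ++ [f']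
  have h7 := hFspec ⟨l ++ [e], h⟩
  have h8 := hFspec ⟨l, hl⟩
  rw [hf', h8, List.append_assoc] at h7
  exact List.append_cancel_left h7.symm


/-! ### Swap automorphisms -/

/-- `x` lies in the cone hanging below the edge `a`. -/
def Pat {T : RGraph} (hU : T.IsTree) (z : T.V) (a : T.E) (x : T.V) : Prop :=
  ∃ r : Paths T (T.t a), (rp hU x).1 = (rp hU z).1 ++ a :: r.1

open Classical in
/-- Push `x` from the cone below `a` to the cone below `b` via `G`. -/
noncomputable def swHalf {T : RGraph} (hU : T.IsTree) (z : T.V) (a b : T.E)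
    (G : Paths T (T.t a) → Paths T (T.t b)) (x : T.V) : T.V :=
  if h : Pat hU z a x
  then T.pathTarget T.root ((rp hU z).1 ++ b :: (G h.choose).1)
  else x

open Classical in
/-- The permutation swapping the cones below `f₁` and `f₂` via `F`. -/
noncomputable def swapFun {T : RGraph} (hU : T.IsTree) (z : T.V) (f₁ f₂ : T.E)
    (F : Paths T (T.t f₁) ≃ Paths T (T.t f₂)) (x : T.V) : T.V :=
  if Pat hU z f₁ x then swHalf hU z f₁ f₂ ⇑F x else swHalf hU z f₂ f₁ ⇑F.symm x

lemma pat_excl {T : RGraph} (hU : T.IsTree) {z : T.V} {a b : T.E} {x : T.V}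
    (h1 : Pat hU z a x) (h2 : Pat hU z b x) : a = b := by
  obtain ⟨r1, hr1⟩ := h1
  obtain ⟨r2, hr2⟩ := h2
  rw [hr1] at hr2
  have h3 := List.append_cancel_left hr2
  injection h3

lemma pat_depth {T : RGraph} (hU : T.IsTree) {z : T.V} {a : T.E} {x : T.V}
    (h : Pat hU z a x) : depth hU z < depth hU x := by
  obtain ⟨r, hr⟩ := h
  show (rp hU z).1.length < (rp hU x).1.length
  rw [hr]
  simp

lemma pat_path {T : RGraph} (hU : T.IsTree) {z : T.V} {a : T.E} {x : T.V} {w : List T.E}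
    (hx : (rp hU x).1 = (rp hU z).1 ++ a :: w) : T.PathFrom (T.t a) w := by
  have h1 := (rp hU x).2
  rw [hx] at h1
  exact (pathFrom_cons.mp (pathFrom_append'.mp h1).2).2

lemma swHalf_spec {T : RGraph} (hU : T.IsTree) (z : T.V) (a b : T.E) (hb : T.s b = z)
    (G : Paths T (T.t a) → Paths T (T.t b)) (x : T.V) (r : Paths T (T.t a))
    (hx : (rp hU x).1 = (rp hU z).1 ++ a :: r.1) :
    (rp hU (swHalf hU z a b G x)).1 = (rp hU z).1 ++ b :: (G r).1 := by
  have hpat : Pat hU z a x := ⟨r, hx⟩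
  unfold swHalf
  rw [dif_pos hpat]
  have hch : hpat.choose = r := by
    apply Subtype.ext
    have h1 := hpat.choose_spec
    have h3 := List.append_cancel_left (hx.symm.trans h1)
    injection h3 with h4 h5
    exact h5.symm
  rw [hch]
  have hL : T.PathFrom T.root ((rp hU z).1 ++ b :: (G r).1) :=
    pathFrom_append'.mpr ⟨(rp hU z).2, by
      rw [rp_target]
      exact pathFrom_cons.mpr ⟨hb, (G r).2⟩⟩
  rw [rp_unique hU _ hL rfl]

lemma swHalf_neg {T : RGraph} (hU : T.IsTree) (z : T.V) (a b : T.E)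
    (G : Paths T (T.t a) → Paths T (T.t b)) (x : T.V) (h : ¬ Pat hU z a x) :
    swHalf hU z a b G x = x := by
  unfold swHalf
  rw [dif_neg h]

lemma swap_pat1 {T : RGraph} (hU : T.IsTree) (z : T.V) (f₁ f₂ : T.E) (hs₂ : T.s f₂ = z)
    (F : Paths T (T.t f₁) ≃ Paths T (T.t f₂)) (x : T.V) (r : Paths T (T.t f₁))
    (hx : (rp hU x).1 = (rp hU z).1 ++ f₁ :: r.1) :
    (rp hU (swapFun hU z f₁ f₂ F x)).1 = (rp hU z).1 ++ f₂ :: (F r).1 := by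
  have hp : Pat hU z f₁ x := ⟨r, hx⟩
  unfold swapFun
  rw [if_pos hp]
  exact swHalf_spec hU z f₁ f₂ hs₂ ⇑F x r hx

lemma swap_pat2 {T : RGraph} (hU : T.IsTree) (z : T.V) (f₁ f₂ : T.E) (hne : f₁ ≠ f₂)
    (hs₁ : T.s f₁ = z)
    (F : Paths T (T.t f₁) ≃ Paths T (T.t f₂)) (x : T.V) (r : Paths T (T.t f₂))
    (hx : (rp hU x).1 = (rp hU z).1 ++ f₂ :: r.1) :
    (rp hU (swapFun hU z f₁ f₂ F x)).1 = (rp hU z).1 ++ f₁ :: (F.symm r).1 := by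
  have hnp : ¬ Pat hU z f₁ x := fun h1 => hne (pat_excl hU h1 ⟨r, hx⟩)
  unfold swapFun
  rw [if_neg hnp]
  exact swHalf_spec hU z f₂ f₁ hs₁ ⇑F.symm x r hx

lemma swap_none {T : RGraph} (hU : T.IsTree) (z : T.V) (f₁ f₂ : T.E)
    (F : Paths T (T.t f₁) ≃ Paths T (T.t f₂)) (x : T.V)
    (h1 : ¬ Pat hU z f₁ x) (h2 : ¬ Pat hU z f₂ x) :
    swapFun hU z f₁ f₂ F x = x := by
  unfold swapFun
  rw [if_neg h1]
  exact swHalf_neg hU z f₂ f₁ ⇑F.symm x h2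

lemma swap_moved {T : RGraph} (hU : T.IsTree) (z : T.V) (f₁ f₂ : T.E)
    (F : Paths T (T.t f₁) ≃ Paths T (T.t f₂)) (x : T.V)
    (h : swapFun hU z f₁ f₂ F x ≠ x) : depth hU z < depth hU x := by
  by_cases h1 : Pat hU z f₁ x
  · exact pat_depth hU h1
  by_cases h2 : Pat hU z f₂ x
  · exact pat_depth hU h2
  · exact absurd (swap_none hU z f₁ f₂ F x h1 h2) h

lemma swap_inv {T : RGraph} (hU : T.IsTree) (z : T.V) (f₁ f₂ : T.E) (hne : f₁ ≠ f₂)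
    (hs₁ : T.s f₁ = z) (hs₂ : T.s f₂ = z)
    (F : Paths T (T.t f₁) ≃ Paths T (T.t f₂)) (x : T.V) :
    swapFun hU z f₂ f₁ F.symm (swapFun hU z f₁ f₂ F x) = x := by
  by_cases h1 : Pat hU z f₁ x
  · obtain ⟨r, hx⟩ := h1
    have e1 := swap_pat1 hU z f₁ f₂ hs₂ F x r hx
    have e2 := swap_pat1 hU z f₂ f₁ hs₁ F.symm _ (F r) e1
    apply rp_inj hU
    rw [e2, F.symm_apply_apply, ← hx]
  by_cases h2 : Pat hU z f₂ x
  · obtain ⟨r, hx⟩ := h2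
    have e1 := swap_pat2 hU z f₁ f₂ hne hs₁ F x r hx
    have e2 := swap_pat2 hU z f₂ f₁ hne.symm hs₂ F.symm _ (F.symm r) e1
    apply rp_inj hU
    rw [e2]
    simp only [Equiv.symm_symm, Equiv.apply_symm_apply]
    exact hx.symm
  · rw [swap_none hU z f₁ f₂ F x h1 h2, swap_none hU z f₂ f₁ F.symm x h2 h1]

lemma swap_adj {T : RGraph} (hU : T.IsTree) (z : T.V) (f₁ f₂ : T.E) (hne : f₁ ≠ f₂)
    (hs₁ : T.s f₁ = z) (hs₂ : T.s f₂ = z)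
    (F : Paths T (T.t f₁) ≃ Paths T (T.t f₂)) (hF : Coherent ⇑F) {x y : T.V}
    (hxy : T.Adj x y) :
    T.Adj (swapFun hU z f₁ f₂ F x) (swapFun hU z f₁ f₂ F y) := by
  obtain ⟨e, he⟩ := (adj_iff_rp hU x y).mp hxy
  by_cases h1 : Pat hU z f₁ x
  · obtain ⟨r, hx⟩ := h1
    have hy : (rp hU y).1 = (rp hU z).1 ++ f₁ :: (r.1 ++ [e]) := by
      rw [he, hx]; simp
    have hry : T.PathFrom (T.t f₁) (r.1 ++ [e]) := pat_path hU hy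
    have e1 := swap_pat1 hU z f₁ f₂ hs₂ F x r hx
    have e2 := swap_pat1 hU z f₁ f₂ hs₂ F y ⟨r.1 ++ [e], hry⟩ hy
    obtain ⟨e', he'⟩ := hF r.1 r.2 e hry
    apply (adj_iff_rp hU _ _).mpr
    refine ⟨e', ?_⟩
    rw [e2, he', e1, List.append_assoc]
    rfl
  · by_cases h2 : Pat hU z f₂ x
    · obtain ⟨r, hx⟩ := h2
      have hy : (rp hU y).1 = (rp hU z).1 ++ f₂ :: (r.1 ++ [e]) := by
        rw [he, hx]; simp
      have hry : T.PathFrom (T.t f₂) (r.1 ++ [e]) := pat_path hU hy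
      have e1 := swap_pat2 hU z f₁ f₂ hne hs₁ F x r hx
      have e2 := swap_pat2 hU z f₁ f₂ hne hs₁ F y ⟨r.1 ++ [e], hry⟩ hy
      obtain ⟨e', he'⟩ := coh_symm hF r.1 r.2 e hry
      apply (adj_iff_rp hU _ _).mpr
      refine ⟨e', ?_⟩
      rw [e2, he', e1, List.append_assoc]
      rfl
    · have e1 := swap_none hU z f₁ f₂ F x h1 h2
      by_cases hy1 : Pat hU z f₁ y
      · obtain ⟨ry, hyy⟩ := hy1
        rcases List.eq_nil_or_concat ry.1 with h0 | ⟨r₀, e₀, hc⟩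
        · rw [h0] at hyy
          have h5 : (rp hU x).1 ++ [e] = (rp hU z).1 ++ [f₁] := by rw [← he, hyy]
          obtain ⟨h6, _⟩ := List.append_inj' h5 rfl
          have hxz : x = z := rp_inj hU h6
          have e2 := swap_pat1 hU z f₁ f₂ hs₂ F y ⟨[], T.pathFrom_nil _⟩ hyy
          rw [coh_nil hF] at e2
          have hyt : swapFun hU z f₁ f₂ F y = T.t f₂ := by
            apply rp_inj hU
            rw [e2, rp_t hU f₂, hs₂]
          rw [e1, hyt, hxz]
          exact ⟨f₂, hs₂, rfl⟩
        · rw [List.concat_eq_append] at hc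
          rw [hc] at hyy
          have h5 : (rp hU x).1 ++ [e] = ((rp hU z).1 ++ f₁ :: r₀) ++ [e₀] := by
            rw [← he, hyy]; simp
          obtain ⟨h6, _⟩ := List.append_inj' h5 rfl
          exact absurd ⟨⟨r₀, pat_path hU h6⟩, h6⟩ h1
      · by_cases hy2 : Pat hU z f₂ y
        · obtain ⟨ry, hyy⟩ := hy2
          rcases List.eq_nil_or_concat ry.1 with h0 | ⟨r₀, e₀, hc⟩
          · rw [h0] at hyy
            have h5 : (rp hU x).1 ++ [e] = (rp hU z).1 ++ [f₂] := by rw [← he, hyy]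
            obtain ⟨h6, _⟩ := List.append_inj' h5 rfl
            have hxz : x = z := rp_inj hU h6
            have e2 := swap_pat2 hU z f₁ f₂ hne hs₁ F y ⟨[], T.pathFrom_nil _⟩ hyy
            rw [coh_nil (coh_symm hF)] at e2
            have hyt : swapFun hU z f₁ f₂ F y = T.t f₁ := by
              apply rp_inj hU
              rw [e2, rp_t hU f₁, hs₁]
            rw [e1, hyt, hxz]
            exact ⟨f₁, hs₁, rfl⟩
          · rw [List.concat_eq_append] at hc
            rw [hc] at hyy
            have h5 : (rp hU x).1 ++ [e] = ((rp hU z).1 ++ f₂ :: r₀) ++ [e₀] := by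
              rw [← he, hyy]; simp
            obtain ⟨h6, _⟩ := List.append_inj' h5 rfl
            exact absurd ⟨⟨r₀, pat_path hU h6⟩, h6⟩ h2
        · have e2 := swap_none hU z f₁ f₂ F y hy1 hy2
          rw [e1, e2]
          exact hxy

/-- Existence of the swap automorphism. -/
lemma swap_exists {T : RGraph} (hU : T.IsTree) {f₁ f₂ : T.E} (hne : f₁ ≠ f₂)
    (hss : T.s f₁ = T.s f₂) (hce : ConeEquiv T (T.t f₁) (T.t f₂)) :
    ∃ σ : Equiv.Perm T.V, σ ∈ T.autGroup ∧ σ (T.t f₁) = T.t f₂ ∧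
      ∀ x, σ x ≠ x → depth hU (T.s f₁) < depth hU x := by
  obtain ⟨F, hF⟩ := hce
  set z := T.s f₁ with hz
  have hs₁ : T.s f₁ = z := rfl
  have hs₂ : T.s f₂ = z := hss.symm
  have hli : Function.LeftInverse (swapFun hU z f₂ f₁ F.symm) (swapFun hU z f₁ f₂ F) :=
    fun x => swap_inv hU z f₁ f₂ hne hs₁ hs₂ F x
  have hri : Function.RightInverse (swapFun hU z f₂ f₁ F.symm) (swapFun hU z f₁ f₂ F) := by
    intro x
    have h3 := swap_inv hU z f₂ f₁ hne.symm hs₂ hs₁ F.symm x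
    rwa [Equiv.symm_symm] at h3
  set σ : Equiv.Perm T.V := ⟨swapFun hU z f₁ f₂ F, swapFun hU z f₂ f₁ F.symm, hli, hri⟩
    with hσ
  have hmv : ∀ x, σ x ≠ x → depth hU z < depth hU x := fun x h =>
    swap_moved hU z f₁ f₂ F x h
  refine ⟨σ, ⟨?_, ?_⟩, ?_, hmv⟩
  · by_contra h
    have h2 := hmv T.root h
    rw [depth_root] at h2
    omega
  · intro v w
    constructor
    · exact fun h => swap_adj hU z f₁ f₂ hne hs₁ hs₂ F hF h
    · intro h
      have h2 := swap_adj hU z f₂ f₁ hne.symm hs₂ hs₁ F.symm (coh_symm hF) h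
      rwa [show swapFun hU z f₂ f₁ F.symm (σ v) = v from hli v,
        show swapFun hU z f₂ f₁ F.symm (σ w) = w from hli w] at h2
  · show swapFun hU z f₁ f₂ F (T.t f₁) = T.t f₂
    have hx : (rp hU (T.t f₁)).1 = (rp hU z).1 ++ f₁ :: ([] : List T.E) := by
      rw [rp_t hU f₁, hs₁]
    have e2 := swap_pat1 hU z f₁ f₂ hs₂ F (T.t f₁) ⟨[], T.pathFrom_nil _⟩ hx
    rw [coh_nil hF] at e2
    apply rp_inj hU
    rw [e2, rp_t hU f₂, hs₂]


/-! ### Finitely many swap vertices implies finite automorphism group -/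

/-- `v` is a swap vertex: two distinct outgoing edges with equivalent cones. -/
def SwapAt (T : RGraph) (v : T.V) : Prop :=
  ∃ f₁ f₂ : T.E, f₁ ≠ f₂ ∧ T.s f₁ = v ∧ T.s f₂ = v ∧ ConeEquiv T (T.t f₁) (T.t f₂)

lemma aut_eq_of_agree {T : RGraph} (hU : T.IsTree) {N : ℕ}
    (hsw : ∀ v, SwapAt T v → depth hU v < N)
    {g h : Equiv.Perm T.V} (hg : g ∈ T.autGroup) (hh : h ∈ T.autGroup)
    (hagree : ∀ v, depth hU v ≤ N → g v = h v) : g = h := by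
  have hf : g⁻¹ * h ∈ T.autGroup := mul_mem (inv_mem hg) hh
  set f := g⁻¹ * h with hfdef
  have hfix : ∀ v, depth hU v ≤ N → f v = v := by
    intro v hv
    show (g⁻¹ * h) v = v
    rw [Equiv.Perm.mul_apply, ← hagree v hv]
    exact g.symm_apply_apply v
  have main : ∀ d v, depth hU v = d → f v = v := by
    intro d
    induction d using Nat.strong_induction_on with
    | _ d ih =>
      intro v hv
      by_cases hd : d ≤ N
      · exact hfix v (by omega)
      · push_neg at hd
        have hlen : (rp hU v).1.length = d := hv
        rcases List.eq_nil_or_concat (rp hU v).1 with h0 | ⟨m₀, e, hm⟩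
        · rw [h0] at hlen; simp at hlen; omega
        · rw [List.concat_eq_append] at hm
          have hpath := (rp hU v).2
          rw [hm] at hpath
          have hse : T.s e = T.pathTarget T.root m₀ :=
            pathFrom_single.mp (pathFrom_append'.mp hpath).2
          have hrpw : (rp hU (T.s e)).1 = m₀ := by
            rw [hse]
            rw [rp_unique hU m₀ (pathFrom_append'.mp hpath).1 rfl]
          have htev : T.t e = v := by
            have h6 := rp_target hU v
            rw [hm] at h6
            simpa using h6
          have hdw : depth hU (T.s e) = d - 1 := by
            show (rp hU (T.s e)).1.length = d - 1
            rw [hrpw]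
            have : m₀.length + 1 = d := by rw [← hlen, hm]; simp
            omega
          have hfw : f (T.s e) = T.s e := ih (d-1) (by omega) _ hdw
          have hadj : T.Adj (T.s e) v := ⟨e, rfl, htev⟩
          have hadj2 := (hf.2 (T.s e) v).mp hadj
          rw [hfw] at hadj2
          obtain ⟨e', he'⟩ := (adj_iff_rp hU _ _).mp hadj2
          have hce : ConeEquiv T v (f v) := aut_coneEquiv hU hf v
          by_cases hee : e' = e
          · apply rp_inj hU
            rw [he', hee, hrpw, ← hm]
          · have hse' : T.s e' = T.s e := by
              have hp2 := (rp hU (f v)).2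
              rw [he'] at hp2
              have h7 := (pathFrom_append'.mp hp2).2
              rw [rp_target] at h7
              exact pathFrom_single.mp h7
            have hte' : T.t e' = f v := by
              have h8 := rp_target hU (f v)
              rw [he'] at h8
              simpa using h8
            have hswap : SwapAt T (T.s e) :=
              ⟨e, e', fun hq => hee hq.symm, rfl, hse', by rw [htev, hte']; exact hce⟩
            have h9 := hsw _ hswap
            omega
  have hfe : ∀ v, f v = v := fun v => main _ v rfl
  have : f = 1 := Equiv.ext fun v => hfe v
  have h10 : g⁻¹ * h = 1 := this
  rw [inv_mul_eq_one] at h10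
  exact h10

lemma finite_aut {T : RGraph} (hU : T.IsTree) (hLF : T.LocallyFinite)
    (hfin : {v : T.V | SwapAt T v}.Finite) : Finite ↥T.autGroup := by
  obtain ⟨N, hN⟩ : ∃ N, ∀ v, SwapAt T v → depth hU v < N := by
    have himg := hfin.image (depth hU)
    obtain ⟨N, hN⟩ := himg.bddAbove
    exact ⟨N + 1, fun v hv => by
      have := hN (Set.mem_image_of_mem _ hv)
      omega⟩
  haveI hballfin : Finite ↥{v : T.V | depth hU v ≤ N} := by
    have := finite_ball hU hLF N
    exact this.to_subtype
  have hmap : ∀ (g : ↥T.autGroup) (v : ↥{v : T.V | depth hU v ≤ N}),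
      (g : Equiv.Perm T.V) v.1 ∈ {v : T.V | depth hU v ≤ N} := by
    intro g v
    show depth hU _ ≤ N
    rw [depth_aut hU g.2]
    exact v.2
  apply Finite.of_injective (f := fun (g : ↥T.autGroup) =>
    fun v : ↥{v : T.V | depth hU v ≤ N} =>
      (⟨(g : Equiv.Perm T.V) v.1, hmap g v⟩ : ↥{v : T.V | depth hU v ≤ N}))
  intro g1 g2 hgh
  apply Subtype.ext
  apply aut_eq_of_agree hU hN g1.2 g2.2
  intro v hv
  exact congrArg Subtype.val (congrFun hgh ⟨v, hv⟩)

lemma swap_infinite_of_aut_infinite {T : RGraph} (hU : T.IsTree) (hLF : T.LocallyFinite)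
    (hinf : Infinite ↥T.autGroup) : {v : T.V | SwapAt T v}.Infinite := by
  by_contra h
  rw [Set.not_infinite] at h
  haveI := finite_aut hU hLF h
  exact not_finite ↥T.autGroup


/-! ### Coverings: lifting equivalences -/

lemma cover_outBij {B A : RGraph} {p : GraphHom B A} (hp : p.IsCovering) (q : B.V) :
    Function.Bijective (p.outMap q) := by
  constructor
  · rintro ⟨e, he⟩ ⟨e', he'⟩ hee
    have hv : p.e e = p.e e' := congrArg Subtype.val hee
    have hpath : A.PathFrom (p.v q) [p.e e] := pathFrom_single.mpr (by rw [p.s_eq, he])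
    obtain ⟨l, hl, hluniq⟩ := hp.2 q [p.e e] hpath
    have h1 := hluniq [e] ⟨pathFrom_single.mpr he, rfl⟩
    have h2 := hluniq [e'] ⟨pathFrom_single.mpr he', by simp [hv]⟩
    have h3 : [e] = [e'] := h1.trans h2.symm
    apply Subtype.ext
    injection h3
  · rintro ⟨a, ha⟩
    have hpath : A.PathFrom (p.v q) [a] := pathFrom_single.mpr ha
    obtain ⟨l, ⟨hl, hlm⟩, _⟩ := hp.2 q [a] hpath
    cases l with
    | nil => simp at hlm
    | cons e m =>
      simp at hlm
      refine ⟨⟨e, (pathFrom_cons.mp hl).1⟩, ?_⟩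
      exact Subtype.ext hlm.1

noncomputable def liftEquiv {B A : RGraph} {p : GraphHom B A} (hp : p.IsCovering) (v : B.V) :
    Paths B v ≃ Paths A (p.v v) :=
  Equiv.ofBijective (fun l => ⟨l.1.map p.e, p.pathFrom_map l.2⟩) (by
    constructor
    · intro a b hab
      have hv : a.1.map p.e = b.1.map p.e := congrArg Subtype.val hab
      obtain ⟨l, hl, huniq⟩ := hp.2 v (a.1.map p.e) (p.pathFrom_map a.2)
      have h1 := huniq a.1 ⟨a.2, rfl⟩
      have h2 := huniq b.1 ⟨b.2, hv.symm⟩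
      exact Subtype.ext (h1.trans h2.symm)
    · intro m
      obtain ⟨l, hl, _⟩ := hp.2 v m.1 m.2
      exact ⟨⟨l, hl.1⟩, Subtype.ext hl.2⟩)

lemma liftEquiv_map {B A : RGraph} {p : GraphHom B A} (hp : p.IsCovering) (v : B.V)
    (l : Paths B v) : ((liftEquiv hp v) l).1 = l.1.map p.e := rfl

lemma coneEquiv_of_cover {B A : RGraph} {p : GraphHom B A} (hp : p.IsCovering)
    {v w : B.V} (hvw : p.v v = p.v w) : ConeEquiv B v w := by
  have hiff : ∀ l : List A.E, A.PathFrom (p.v v) l ↔ A.PathFrom (p.v w) l := by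
    intro l; rw [hvw]
  set F := (liftEquiv hp v).trans ((Equiv.subtypeEquivRight hiff).trans (liftEquiv hp w).symm)
    with hFdef
  have hmap : ∀ l : Paths B v, (F l).1.map p.e = l.1.map p.e := by
    intro l
    have h1 : (liftEquiv hp w) (F l) = (Equiv.subtypeEquivRight hiff) ((liftEquiv hp v) l) := by
      show (liftEquiv hp w) ((liftEquiv hp w).symm _) = _
      rw [Equiv.apply_symm_apply]
    calc (F l).1.map p.e = ((liftEquiv hp w) (F l)).1 := rfl
      _ = ((Equiv.subtypeEquivRight hiff) ((liftEquiv hp v) l)).1 := by rw [h1]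
      _ = l.1.map p.e := rfl
  refine ⟨F, ?_⟩
  intro l hl e h
  have hlen : (F ⟨l ++ [e], h⟩).1.length = l.length + 1 := by
    have h2 := congrArg List.length (hmap ⟨l ++ [e], h⟩)
    simpa using h2
  rcases List.eq_nil_or_concat (F ⟨l ++ [e], h⟩).1 with h0 | ⟨m₀, f, hm⟩
  · rw [h0] at hlen; simp at hlen
  · rw [List.concat_eq_append] at hm
    refine ⟨f, ?_⟩
    rw [hm]
    congr 1
    have hFm := hmap ⟨l ++ [e], h⟩
    rw [hm, List.map_append, List.map_append] at hFm
    obtain ⟨hmm, _⟩ := List.append_inj' hFm (by simp)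
    have hpath2 := (F ⟨l ++ [e], h⟩).2
    rw [hm] at hpath2
    have hm₀path : B.PathFrom w m₀ := (pathFrom_append'.mp hpath2).1
    have hApath : A.PathFrom (p.v w) (l.map p.e) := by
      rw [← hvw]; exact p.pathFrom_map hl
    obtain ⟨l₀, hl₀, huniq⟩ := hp.2 w (l.map p.e) hApath
    have e1 := huniq m₀ ⟨hm₀path, hmm⟩
    have e2 := huniq (F ⟨l, hl⟩).1 ⟨(F ⟨l, hl⟩).2, hmap ⟨l, hl⟩⟩
    rw [e1, e2]

lemma uplp_of_outBij {B A : RGraph} (p : GraphHom B A)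
    (hbij : ∀ q : B.V, Function.Bijective (p.outMap q)) : p.UPLP := by
  intro q l'
  induction l' generalizing q with
  | nil =>
    intro h
    refine ⟨[], ⟨B.pathFrom_nil q, rfl⟩, ?_⟩
    rintro l ⟨hl, hml⟩
    exact List.map_eq_nil_iff.mp hml
  | cons a m ih =>
    intro h
    have hsa : A.s a = p.v q := (pathFrom_cons.mp h).1
    obtain ⟨⟨e, hse⟩, hpe⟩ := (hbij q).2 ⟨a, hsa⟩
    have hpe' : p.e e = a := congrArg Subtype.val hpe
    have hm : A.PathFrom (p.v (B.t e)) m := by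
      rw [← p.t_eq, hpe']
      exact (pathFrom_cons.mp h).2
    obtain ⟨l₀, ⟨hl₀, hml₀⟩, huniq⟩ := ih (B.t e) hm
    refine ⟨e :: l₀, ⟨pathFrom_cons.mpr ⟨hse, hl₀⟩, by simp [hpe', hml₀]⟩, ?_⟩
    rintro l ⟨hl, hml⟩
    cases l with
    | nil => simp at hml
    | cons e₁ m₁ =>
      simp at hml
      have hse₁ : B.s e₁ = q := (pathFrom_cons.mp hl).1
      have h5 : p.outMap q ⟨e₁, hse₁⟩ = ⟨a, hsa⟩ := Subtype.ext hml.1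
      have he₁ : (⟨e₁, hse₁⟩ : {e : B.E // B.s e = q}) = ⟨e, hse⟩ :=
        (hbij q).1 (h5.trans hpe.symm)
      have he₁' : e₁ = e := congrArg Subtype.val he₁
      have hpm₁ : B.PathFrom (B.t e) m₁ := he₁' ▸ (pathFrom_cons.mp hl).2
      rw [he₁', huniq m₁ ⟨hpm₁, hml.2⟩]


/-! ### The Cantor construction: continuum many automorphisms -/

lemma cantor_aux {T : RGraph} (hU : T.IsTree) (D : ℕ → ℕ) (σ : ℕ → Equiv.Perm T.V)
    (u₁ u₂ : ℕ → T.V)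
    (hmem : ∀ k, σ k ∈ T.autGroup)
    (hswap : ∀ k, σ k (u₁ k) = u₂ k)
    (hneq : ∀ k, u₁ k ≠ u₂ k)
    (hdep : ∀ k, depth hU (u₁ k) = D k + 1)
    (hmov : ∀ k x, σ k x ≠ x → D k < depth hU x)
    (hmono : ∀ k, k ≤ D k)
    (hstrict : ∀ j k, k < j → D k + 1 ≤ D j) :
    Cardinal.continuum ≤ Cardinal.mk ↥T.autGroup := by
  classical
  let G : Set ℕ → ℕ → Equiv.Perm T.V := fun S N =>
    Nat.rec 1 (fun n acc => acc * (if n ∈ S then σ n else 1)) N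
  have hG0 : ∀ S, G S 0 = 1 := fun S => rfl
  have hGsucc : ∀ S N, G S (N + 1) = G S N * (if N ∈ S then σ N else 1) := fun S N => rfl
  have hGmem : ∀ S N, G S N ∈ T.autGroup := by
    intro S N
    induction N with
    | zero => exact one_mem _
    | succ n ih =>
      rw [hGsucc]
      refine mul_mem ih ?_
      by_cases h : n ∈ S
      · rw [if_pos h]; exact hmem n
      · rw [if_neg h]; exact one_mem _
  have hGfix : ∀ (S : Set ℕ) (N M : ℕ) (x : T.V), N ≤ M →
      (∀ j, N ≤ j → j < M → σ j x = x) → G S M x = G S N x := by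
    intro S N M
    induction M with
    | zero =>
      intro x hNM _
      have : N = 0 := by omega
      rw [this]
    | succ m ih =>
      intro x hNM hfix
      rcases Nat.lt_or_ge N (m + 1) with h | h
      · have hNm : N ≤ m := by omega
        rw [hGsucc, Equiv.Perm.mul_apply]
        have hx : (if m ∈ S then σ m else 1) x = x := by
          by_cases hm : m ∈ S
          · rw [if_pos hm]; exact hfix m hNm (by omega)
          · rw [if_neg hm]; rfl
        rw [hx]
        exact ih x hNm (fun j h1 h2 => hfix j h1 (by omega))
      · have : N = m + 1 := by omega
        rw [this]
  have hGdeep : ∀ (S : Set ℕ) (N M : ℕ) (x : T.V), N ≤ M → depth hU x ≤ N →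
      G S M x = G S N x := by
    intro S N M x hNM hx
    apply hGfix S N M x hNM
    intro j hj1 hj2
    by_contra hmoved
    have h1 := hmov j x hmoved
    have h2 := hmono j
    omega
  have hGagree : ∀ (S S' : Set ℕ) (N : ℕ), (∀ j < N, j ∈ S ↔ j ∈ S') → G S N = G S' N := by
    intro S S' N
    induction N with
    | zero => intro _; rfl
    | succ n ih =>
      intro hag
      rw [hGsucc, hGsucc, ih (fun j hj => hag j (by omega))]
      congr 1
      by_cases h : n ∈ S
      · rw [if_pos h, if_pos ((hag n (by omega)).mp h)]
      · rw [if_neg h, if_neg (fun h' => h ((hag n (by omega)).mpr h'))]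
  have hGdepth : ∀ (S : Set ℕ) (N : ℕ) (x : T.V), depth hU (G S N x) = depth hU x :=
    fun S N x => depth_aut hU (hGmem S N) x
  let gfun : Set ℕ → T.V → T.V := fun S x => G S (depth hU x + 1) x
  let ginv : Set ℕ → T.V → T.V := fun S x => (G S (depth hU x + 1))⁻¹ x
  have hgfi : ∀ S x, ginv S (gfun S x) = x := by
    intro S x
    have hd : depth hU (gfun S x) = depth hU x := hGdepth S (depth hU x + 1) x
    show (G S (depth hU (gfun S x) + 1))⁻¹ (gfun S x) = x
    rw [hd]
    exact Equiv.symm_apply_apply _ _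
  have hgif : ∀ S x, gfun S (ginv S x) = x := by
    intro S x
    have hd : depth hU (ginv S x) = depth hU x :=
      depth_aut hU (inv_mem (hGmem S (depth hU x + 1))) x
    show G S (depth hU (ginv S x) + 1) (ginv S x) = x
    rw [hd]
    exact Equiv.apply_symm_apply _ _
  let g : Set ℕ → Equiv.Perm T.V := fun S => ⟨gfun S, ginv S, hgfi S, hgif S⟩
  have hgval : ∀ S x, g S x = G S (depth hU x + 1) x := fun S x => rfl
  have hgmem : ∀ S, g S ∈ T.autGroup := by
    intro S
    constructor
    · rw [hgval, depth_root hU]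
      exact (hGmem S 1).1
    · intro v w
      set N := max (depth hU v) (depth hU w) + 1 with hN
      have hv : g S v = G S N v := by
        rw [hgval]
        exact (hGdeep S (depth hU v + 1) N v (by omega) (by omega)).symm
      have hw : g S w = G S N w := by
        rw [hgval]
        exact (hGdeep S (depth hU w + 1) N w (by omega) (by omega)).symm
      rw [hv, hw]
      exact (hGmem S N).2 v w
  -- injectivity
  have hginj : Function.Injective g := by
    intro S S' hSS'
    have main : ∀ k, (∀ j, j < k → (j ∈ S ↔ j ∈ S')) → (k ∈ S ↔ k ∈ S') := by
      intro k hag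
      have claim : ∀ (S₁ S₂ : Set ℕ), g S₁ = g S₂ → (∀ j, j < k → (j ∈ S₁ ↔ j ∈ S₂)) →
          k ∈ S₁ → k ∈ S₂ := by
        intro S₁ S₂ hg hag' hk1
        by_contra hk2
        have hw : depth hU (u₁ k) = D k + 1 := hdep k
        have e1 : g S₁ (u₁ k) = G S₁ (k + 1) (u₁ k) := by
          rw [hgval, hw]
          apply hGfix S₁ (k + 1) (D k + 2) (u₁ k) (by have := hmono k; omega)
          intro j hj1 hj2
          by_contra hmoved
          have h1 := hmov j (u₁ k) hmoved
          have h2 := hstrict j k (by omega)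
          omega
        have e2 : g S₂ (u₁ k) = G S₂ (k + 1) (u₁ k) := by
          rw [hgval, hw]
          apply hGfix S₂ (k + 1) (D k + 2) (u₁ k) (by have := hmono k; omega)
          intro j hj1 hj2
          by_contra hmoved
          have h1 := hmov j (u₁ k) hmoved
          have h2 := hstrict j k (by omega)
          omega
        have e3 : G S₁ (k + 1) (u₁ k) = G S₁ k (u₂ k) := by
          rw [hGsucc, Equiv.Perm.mul_apply, if_pos hk1, hswap]
        have e4 : G S₂ (k + 1) (u₁ k) = G S₂ k (u₁ k) := by
          rw [hGsucc, Equiv.Perm.mul_apply, if_neg hk2]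
          rfl
        have e5 : G S₁ k = G S₂ k := hGagree S₁ S₂ k (fun j hj => hag' j hj)
        have e6 : G S₁ k (u₂ k) = G S₁ k (u₁ k) := by
          rw [← e3, ← e1, hg, e2, e4, ← e5]
        exact hneq k ((G S₁ k).injective e6).symm
      exact ⟨fun h => claim S S' hSS' hag h, fun h => claim S' S hSS'.symm
        (fun j hj => (hag j hj).symm) h⟩
    have hSeq : ∀ k, k ∈ S ↔ k ∈ S' := by
      intro k
      induction k using Nat.strong_induction_on with
      | _ k ih => exact main k ih
    ext k
    exact hSeq k
  have hinj2 : Function.Injective (fun S : Set ℕ => (⟨g S, hgmem S⟩ : ↥T.autGroup)) := by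
    intro S S' h
    exact hginj (congrArg Subtype.val h)
  have hcard := Cardinal.mk_le_of_injective hinj2
  rw [Cardinal.mk_set, Cardinal.mk_nat, Cardinal.two_power_aleph0] at hcard
  exact hcard


/-- From a covering quotient with a recurrent double edge, continuum many
automorphisms. -/
lemma continuum_le_aut {T : RGraph} (hU : T.IsTree)
    (hrde : ∃ A : RGraph, IsCovQuotient T A ∧ HasRecDoubleEdge A) :
    Cardinal.continuum ≤ Cardinal.mk ↥T.autGroup := by
  classical
  obtain ⟨A, ⟨p, hp⟩, e₁, e₂, hne, hss, htt, hrec⟩ := hrde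
  obtain ⟨q, γ, hγpath, hγne, hγclosed, π, hπpath, hπtar⟩ :
      ∃ (q : A.V) (γ : List A.E), A.PathFrom q γ ∧ γ ≠ [] ∧ A.pathTarget q γ = q ∧
        ∃ π : List A.E, A.PathFrom q π ∧ A.pathTarget q π = A.s e₁ := by
    rcases hrec with ⟨q, l, hl, hlne, hlc, hmem⟩ | ⟨q, l, hl, hlne, hlc, hreach⟩
    · have hmem' : ∃ e, (e = e₁ ∨ e = e₂) ∧ e ∈ l := by
        rcases hmem with h | h
        · exact ⟨e₁, Or.inl rfl, h⟩
        · exact ⟨e₂, Or.inr rfl, h⟩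
      obtain ⟨e, hee, hel⟩ := hmem'
      obtain ⟨l₁, l₂, hsplit⟩ := List.append_of_mem hel
      subst hsplit
      have h1 := pathFrom_append'.mp hl
      have hse : A.s e = A.pathTarget q l₁ := (pathFrom_cons.mp h1.2).1
      have htl₂ : A.pathTarget (A.t e) l₂ = q := by
        rw [← hlc, pathTarget_append, pathTarget_cons]
      have hpl₁ : A.PathFrom q l₁ := h1.1
      refine ⟨A.s e, e :: (l₂ ++ l₁), ?_, by simp, ?_, [], A.pathFrom_nil _, ?_⟩
      · refine pathFrom_cons.mpr ⟨rfl, ?_⟩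
        refine pathFrom_append'.mpr ⟨(pathFrom_cons.mp h1.2).2, ?_⟩
        rw [htl₂]
        exact hpl₁
      · rw [pathTarget_cons, pathTarget_append, htl₂, ← hse]
      · rcases hee with h | h
        · rw [h, pathTarget_nil]
        · rw [h, pathTarget_nil, ← hss]
    · obtain ⟨π, hπ, hπt⟩ := hreach
      exact ⟨q, l, hl, hlne, hlc, π, hπ, hπt⟩
  obtain ⟨x₀, hx₀⟩ := hp.1 q
  -- powers of the cycle
  let γs : ℕ → List A.E := fun k => (List.replicate k γ).flatten
  have hγs : ∀ k, A.PathFrom q (γs k) ∧ A.pathTarget q (γs k) = q ∧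
      (γs k).length = k * γ.length := by
    intro k
    induction k with
    | zero =>
      refine ⟨A.pathFrom_nil q, rfl, ?_⟩
      show (List.replicate 0 γ).flatten.length = 0 * γ.length
      simp
    | succ n ih =>
      have hrep : γs (n + 1) = γ ++ γs n := by
        show (List.replicate (n + 1) γ).flatten = _
        simp [List.replicate_succ, γs]
      refine ⟨?_, ?_, ?_⟩
      · rw [hrep]
        exact pathFrom_append'.mpr ⟨hγpath, by rw [hγclosed]; exact ih.1⟩
      · rw [hrep, pathTarget_append, hγclosed, ih.2.1]
      · rw [hrep, List.length_append, ih.2.2]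
        ring
  have hfull : ∀ k, A.PathFrom q (γs k ++ π) ∧ A.pathTarget q (γs k ++ π) = A.s e₁ ∧
      (γs k ++ π).length = k * γ.length + π.length := by
    intro k
    refine ⟨pathFrom_append'.mpr ⟨(hγs k).1, by rw [(hγs k).2.1]; exact hπpath⟩, ?_, ?_⟩
    · rw [pathTarget_append, (hγs k).2.1, hπtar]
    · rw [List.length_append, (hγs k).2.2]
  have hfull' : ∀ k, A.PathFrom (p.v x₀) (γs k ++ π) ∧
      A.pathTarget (p.v x₀) (γs k ++ π) = A.s e₁ := by
    intro k
    rw [hx₀]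
    exact ⟨(hfull k).1, (hfull k).2.1⟩
  -- the swap data
  have key : ∀ k : ℕ, ∃ (σ : Equiv.Perm T.V) (w₁ w₂ : T.V), σ ∈ T.autGroup ∧ σ w₁ = w₂ ∧
      w₁ ≠ w₂ ∧ depth hU w₁ = (depth hU x₀ + k * γ.length + π.length) + 1 ∧
      ∀ x, σ x ≠ x → depth hU x₀ + k * γ.length + π.length < depth hU x := by
    intro k
    set m : Paths T x₀ := (liftEquiv hp x₀).symm ⟨γs k ++ π, (hfull' k).1⟩ with hm
    have hmmap : m.1.map p.e = γs k ++ π := by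
      have h2 : (liftEquiv hp x₀) m = ⟨γs k ++ π, (hfull' k).1⟩ := by
        rw [hm, Equiv.apply_symm_apply]
      exact congrArg Subtype.val h2
    set sk := T.pathTarget x₀ m.1 with hsk
    have hpsk : p.v sk = A.s e₁ := by
      have h3 := p.pathTarget_map x₀ m.1
      rw [hmmap] at h3
      rw [hsk, ← h3]
      exact (hfull' k).2
    have hdsk : depth hU sk = depth hU x₀ + k * γ.length + π.length := by
      show (rp hU sk).1.length = _
      rw [hsk, rp_app hU m.2, List.length_append]
      have h4 : m.1.length = k * γ.length + π.length := by
        have := congrArg List.length hmmap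
        rw [List.length_map] at this
        rw [this, (hfull k).2.2]
      rw [h4]
      show (rp hU x₀).1.length + (k * γ.length + π.length)
          = (rp hU x₀).1.length + k * γ.length + π.length
      omega
    obtain ⟨⟨f₁, hf₁⟩, hpf₁⟩ := (cover_outBij hp sk).2 ⟨e₁, hpsk.symm⟩
    obtain ⟨⟨f₂, hf₂⟩, hpf₂⟩ := (cover_outBij hp sk).2 ⟨e₂, by rw [hpsk, hss]⟩
    have hpe₁ : p.e f₁ = e₁ := congrArg Subtype.val hpf₁
    have hpe₂ : p.e f₂ = e₂ := congrArg Subtype.val hpf₂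
    have hfne : f₁ ≠ f₂ := fun h => hne (by rw [← hpe₁, ← hpe₂, h])
    have hce : ConeEquiv T (T.t f₁) (T.t f₂) := by
      apply coneEquiv_of_cover hp
      rw [← p.t_eq, ← p.t_eq, hpe₁, hpe₂, htt]
    obtain ⟨σ, hσmem, hσswap, hσmov⟩ := swap_exists hU hfne (by rw [hf₁, hf₂]) hce
    refine ⟨σ, T.t f₁, T.t f₂, hσmem, hσswap, ?_, ?_, ?_⟩
    · intro h
      exact hfne (t_inj_of_s_eq hU (by rw [hf₁, hf₂]) h)
    · rw [depth_t hU f₁, hf₁, hdsk]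
    · intro x hx
      have := hσmov x hx
      rwa [hf₁, hdsk] at this
  choose σ w₁ w₂ hmem hswap hneq hdep hmov using key
  have hγlen : 1 ≤ γ.length := by
    rcases γ with _ | ⟨a, l⟩
    · exact absurd rfl hγne
    · simp
  apply cantor_aux hU (fun k => depth hU x₀ + k * γ.length + π.length) σ w₁ w₂
    hmem hswap hneq hdep hmov
  · intro k
    have h1 : k * 1 ≤ k * γ.length := Nat.mul_le_mul_left k hγlen
    omega
  · intro j k hkj
    have h1 : (k + 1) * γ.length ≤ j * γ.length := Nat.mul_le_mul_right γ.length hkj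
    have h2 : (k + 1) * γ.length = k * γ.length + γ.length := Nat.succ_mul k γ.length
    omega


/-! ### From subgraph isomorphisms to cone equivalences -/

/-- Convert a path in `T` starting in the cone of `v` into a path of the subgraph. -/
def toSub {T : RGraph} (v : T.V) : (l : List T.E) → (q : T.V) → T.Reach v q →
    T.PathFrom q l → List (T.subgraph v).E
  | [], _, _, _ => []
  | e :: l, _, hq, h =>
      ⟨e, (pathFrom_cons.mp h).1.symm ▸ hq⟩ ::
        toSub v l (T.t e) (RGraph.reach_target ((pathFrom_cons.mp h).1.symm ▸ hq))
          (pathFrom_cons.mp h).2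

lemma toSub_val {T : RGraph} (v : T.V) : ∀ (l : List T.E) (q : T.V) (hq : T.Reach v q)
    (h : T.PathFrom q l), (toSub v l q hq h).map Subtype.val = l := by
  intro l
  induction l with
  | nil => intro q hq h; rfl
  | cons e l ih =>
    intro q hq h
    show _ :: _ = _
    rw [ih]

lemma toSub_path {T : RGraph} (v : T.V) : ∀ (l : List T.E) (q : T.V) (hq : T.Reach v q)
    (h : T.PathFrom q l), (T.subgraph v).PathFrom ⟨q, hq⟩ (toSub v l q hq h) := by
  intro l
  induction l with
  | nil => intro q hq h; exact (T.subgraph v).pathFrom_nil _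
  | cons e l ih =>
    intro q hq h
    refine pathFrom_cons.mpr ⟨Subtype.ext (pathFrom_cons.mp h).1, ?_⟩
    exact ih (T.t e) _ (pathFrom_cons.mp h).2

lemma toSub_append {T : RGraph} (v : T.V) (e : T.E) :
    ∀ (l : List T.E) (q : T.V) (hq : T.Reach v q) (h : T.PathFrom q (l ++ [e]))
      (h₁ : T.PathFrom q l), ∃ ee : (T.subgraph v).E,
        toSub v (l ++ [e]) q hq h = toSub v l q hq h₁ ++ [ee] := by
  intro l
  induction l with
  | nil =>
    intro q hq h h₁
    exact ⟨⟨e, (pathFrom_cons.mp h).1.symm ▸ hq⟩, rfl⟩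
  | cons f l ih =>
    intro q hq h h₁
    obtain ⟨ee, hee⟩ := ih (T.t f) (RGraph.reach_target ((pathFrom_cons.mp h).1.symm ▸ hq))
      (pathFrom_cons.mp h).2 (pathFrom_cons.mp h₁).2
    refine ⟨ee, ?_⟩
    show _ :: _ = (_ :: _) ++ [ee]
    refine Eq.trans ?_ List.cons_append.symm
    congr 1

lemma val_path {T : RGraph} (v : T.V) : ∀ (m : List (T.subgraph v).E)
    (a : (T.subgraph v).V), (T.subgraph v).PathFrom a m → T.PathFrom a.1 (m.map Subtype.val) := by
  intro m
  induction m with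
  | nil => intro a _; exact T.pathFrom_nil _
  | cons e m ih =>
    intro a h
    refine pathFrom_cons.mpr ⟨congrArg Subtype.val (pathFrom_cons.mp h).1, ?_⟩
    exact ih _ (pathFrom_cons.mp h).2

lemma toSub_of_val {T : RGraph} (v : T.V) : ∀ (m : List (T.subgraph v).E)
    (q : T.V) (hq : T.Reach v q) (h : T.PathFrom q (m.map Subtype.val))
    (hm : (T.subgraph v).PathFrom ⟨q, hq⟩ m),
    toSub v (m.map Subtype.val) q hq h = m := by
  intro m
  induction m with
  | nil => intro q hq h hm; rfl
  | cons e m ih =>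
    intro q hq h hm
    show _ :: _ = _ :: _
    congr 1
    exact ih (T.t e.1) _ (pathFrom_cons.mp h).2 (pathFrom_cons.mp hm).2

lemma iso_path_surj {A B : RGraph} (h : GraphHom A B) (hIso : h.IsIso) :
    ∀ (m : List B.E) (a : A.V), B.PathFrom (h.v a) m →
      ∃ l : List A.E, A.PathFrom a l ∧ l.map h.e = m := by
  intro m
  induction m with
  | nil => intro a _; exact ⟨[], A.pathFrom_nil a, rfl⟩
  | cons x m ih =>
    intro a hm
    obtain ⟨e, he⟩ := hIso.2.2 x
    have hsa : A.s e = a := by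
      apply hIso.1.1
      rw [← h.s_eq, he]
      exact (pathFrom_cons.mp hm).1
    have hta : B.PathFrom (h.v (A.t e)) m := by
      rw [← h.t_eq, he]
      exact (pathFrom_cons.mp hm).2
    obtain ⟨l, hl, hlm⟩ := ih (A.t e) hta
    exact ⟨e :: l, pathFrom_cons.mpr ⟨hsa, hl⟩, by simp [he, hlm]⟩

lemma coneEquiv_of_iso {T : RGraph} {v w : T.V}
    (hiso : RGraph.Iso (T.subgraph v) (T.subgraph w)) : ConeEquiv T v w := by
  obtain ⟨h, hIso⟩ := hiso
  have hroot : h.v ⟨v, T.reach_self v⟩ = (T.subgraph w).root := h.root_eq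
  let F : Paths T v → Paths T w := fun l =>
    ⟨((toSub v l.1 v (T.reach_self v) l.2).map h.e).map Subtype.val, by
      have h1 := toSub_path v l.1 v (T.reach_self v) l.2
      have h2 := h.pathFrom_map h1
      rw [hroot] at h2
      exact val_path w _ _ h2⟩
  have hFval : ∀ l : Paths T v,
      (F l).1 = ((toSub v l.1 v (T.reach_self v) l.2).map h.e).map Subtype.val := fun _ => rfl
  have hinj : Function.Injective F := by
    intro a b hab
    have h1 : ((toSub v a.1 v (T.reach_self v) a.2).map h.e).map Subtype.val
        = ((toSub v b.1 v (T.reach_self v) b.2).map h.e).map Subtype.val :=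
      congrArg Subtype.val hab
    have h2 := List.map_injective_iff.mpr Subtype.val_injective h1
    have h2' := List.map_injective_iff.mpr hIso.2.1 h2
    have h3 := congrArg (List.map Subtype.val) h2'
    rw [toSub_val, toSub_val] at h3
    exact Subtype.ext h3
  have hsurj : Function.Surjective F := by
    intro m
    have hms := toSub_path w m.1 w (T.reach_self w) m.2
    have hms' : (T.subgraph w).PathFrom (h.v ⟨v, T.reach_self v⟩)
        (toSub w m.1 w (T.reach_self w) m.2) := by
      rw [hroot]; exact hms
    obtain ⟨ls, hls, hlsm⟩ := iso_path_surj h hIso _ _ hms'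
    have hlpath : T.PathFrom v (ls.map Subtype.val) := val_path v ls _ hls
    refine ⟨⟨ls.map Subtype.val, hlpath⟩, ?_⟩
    apply Subtype.ext
    rw [hFval]
    have h4 : toSub v (ls.map Subtype.val) v (T.reach_self v) hlpath = ls :=
      toSub_of_val v ls v (T.reach_self v) hlpath hls
    rw [h4, hlsm, toSub_val]
  refine ⟨Equiv.ofBijective F ⟨hinj, hsurj⟩, ?_⟩
  intro l hl e hle
  obtain ⟨ee, hee⟩ := toSub_append v e l v (T.reach_self v) hle hl
  refine ⟨(h.e ee).1, ?_⟩
  show (F ⟨l ++ [e], hle⟩).1 = (F ⟨l, hl⟩).1 ++ [(h.e ee).1]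
  rw [hFval, hFval, hee]
  exact (congrArg (List.map Subtype.val) (List.map_append (f := h.e))).trans List.map_append

/-- The setoid of cone equivalence. -/
def coneSetoid (T : RGraph) : Setoid T.V :=
  ⟨ConeEquiv T, ⟨coneEquiv_refl T, coneEquiv_symm, coneEquiv_trans⟩⟩

lemma finite_quotV {T : RGraph} (hFMC : FinManyCones T) :
    Finite (Quotient (coneSetoid T)) := by
  obtain ⟨S, hSfin, hS⟩ := hFMC
  haveI := hSfin.to_subtype
  apply Finite.of_surjective (f := fun ws : ↥S => (⟦ws.1⟧ : Quotient (coneSetoid T)))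
  intro c
  induction c using Quotient.ind with
  | _ x =>
    obtain ⟨ww, hwS, hwiso⟩ := hS x
    exact ⟨⟨ww, hwS⟩, Quotient.sound (coneEquiv_symm (coneEquiv_of_iso hwiso))⟩


/-! ### The minimal covering quotient -/

lemma exists_single {T : RGraph} {x : T.V} (l : Paths T x) (hlen : l.1.length = 1) :
    ∃ e, l.1 = [e] := by
  rcases l with ⟨l, hl⟩
  cases l with
  | nil => simp at hlen
  | cons e m =>
    cases m with
    | nil => exact ⟨e, rfl⟩
    | cons f m => simp at hlen

lemma single_equiv {T : RGraph} {x y : T.V} (F : Paths T x ≃ Paths T y) (hF : Coherent ⇑F) :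
    ∃ oB : {e : T.E // T.s e = x} ≃ {e' : T.E // T.s e' = y},
      ∀ e : {e : T.E // T.s e = x},
        (F ⟨[e.1], pathFrom_single.mpr e.2⟩).1 = [(oB e).1] := by
  classical
  have key : ∀ e : {e : T.E // T.s e = x}, ∃ e' : {e' : T.E // T.s e' = y},
      (F ⟨[e.1], pathFrom_single.mpr e.2⟩).1 = [e'.1] := by
    intro e
    have hlen : (F ⟨[e.1], pathFrom_single.mpr e.2⟩).1.length = 1 := by
      rw [coh_len' hF]
      rfl
    obtain ⟨e', he'⟩ := exists_single _ hlen
    have hp := (F ⟨[e.1], pathFrom_single.mpr e.2⟩).2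
    rw [he'] at hp
    exact ⟨⟨e', pathFrom_single.mp hp⟩, he'⟩
  have key' : ∀ e' : {e' : T.E // T.s e' = y}, ∃ e : {e : T.E // T.s e = x},
      (F.symm ⟨[e'.1], pathFrom_single.mpr e'.2⟩).1 = [e.1] := by
    intro e'
    have hlen : (F.symm ⟨[e'.1], pathFrom_single.mpr e'.2⟩).1.length = 1 := by
      have h2 := coh_len' hF (F.symm ⟨[e'.1], pathFrom_single.mpr e'.2⟩)
      rw [Equiv.apply_symm_apply] at h2
      simpa using h2.symm
    obtain ⟨e, he⟩ := exists_single _ hlen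
    have hp := (F.symm ⟨[e'.1], pathFrom_single.mpr e'.2⟩).2
    rw [he] at hp
    exact ⟨⟨e, pathFrom_single.mp hp⟩, he⟩
  choose fwd hfwd using key
  choose bwd hbwd using key'
  have hli : ∀ e, bwd (fwd e) = e := by
    intro e
    have h1 := hbwd (fwd e)
    have h2 : (⟨[(fwd e).1], pathFrom_single.mpr (fwd e).2⟩ : Paths T y)
        = F ⟨[e.1], pathFrom_single.mpr e.2⟩ := Subtype.ext (hfwd e).symm
    rw [h2, Equiv.symm_apply_apply] at h1
    apply Subtype.ext
    have h3 : [e.1] = [(bwd (fwd e)).1] := h1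
    simpa using h3.symm
  have hri : ∀ e', fwd (bwd e') = e' := by
    intro e'
    have h1 := hfwd (bwd e')
    have h2 : (⟨[(bwd e').1], pathFrom_single.mpr (bwd e').2⟩ : Paths T x)
        = F.symm ⟨[e'.1], pathFrom_single.mpr e'.2⟩ := Subtype.ext (hbwd e').symm
    rw [h2, Equiv.apply_symm_apply] at h1
    apply Subtype.ext
    have h3 : [e'.1] = [(fwd (bwd e')).1] := h1
    simpa using h3.symm
  exact ⟨⟨fwd, bwd, hli, hri⟩, hfwd⟩

lemma out_coneEquiv (T : RGraph) (x : T.V) :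
    ConeEquiv T x ((Quotient.mk (coneSetoid T) x).out) :=
  coneEquiv_symm (Quotient.exact (Quotient.out_eq (Quotient.mk (coneSetoid T) x)))

noncomputable def cF (T : RGraph) (x : T.V) :
    Paths T x ≃ Paths T ((Quotient.mk (coneSetoid T) x).out) :=
  (out_coneEquiv T x).choose

lemma hcF (T : RGraph) (x : T.V) : Coherent ⇑(cF T x) := (out_coneEquiv T x).choose_spec

noncomputable def oBx (T : RGraph) (x : T.V) :
    {e : T.E // T.s e = x} ≃ {e' : T.E // T.s e' = (Quotient.mk (coneSetoid T) x).out} :=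
  (single_equiv (cF T x) (hcF T x)).choose

lemma oBx_spec (T : RGraph) (x : T.V) (e : {e : T.E // T.s e = x}) :
    ((cF T x) ⟨[e.1], pathFrom_single.mpr e.2⟩).1 = [((oBx T x) e).1] :=
  (single_equiv (cF T x) (hcF T x)).choose_spec e

/-- The minimal covering quotient of `T`. -/
noncomputable def minQuot (T : RGraph) : RGraph where
  V := Quotient (coneSetoid T)
  E := {e : T.E // (Quotient.mk (coneSetoid T) (T.s e)).out = T.s e}
  s := fun e => Quotient.mk (coneSetoid T) (T.s e.1)
  t := fun e => Quotient.mk (coneSetoid T) (T.t e.1)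
  root := Quotient.mk (coneSetoid T) T.root

noncomputable def minHom (T : RGraph) : GraphHom T (minQuot T) where
  v := fun x => Quotient.mk (coneSetoid T) x
  e := fun e => ⟨((oBx T (T.s e)) ⟨e, rfl⟩).1, by
    rw [((oBx T (T.s e)) ⟨e, rfl⟩).2, Quotient.out_eq]⟩
  root_eq := rfl
  s_eq := fun e => by
    show Quotient.mk (coneSetoid T) (T.s ((oBx T (T.s e)) ⟨e, rfl⟩).1)
      = Quotient.mk (coneSetoid T) (T.s e)
    rw [((oBx T (T.s e)) ⟨e, rfl⟩).2, Quotient.out_eq]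
  t_eq := fun e => by
    show Quotient.mk (coneSetoid T) (T.t ((oBx T (T.s e)) ⟨e, rfl⟩).1)
      = Quotient.mk (coneSetoid T) (T.t e)
    refine Quotient.sound (coneEquiv_symm ?_)
    exact coneEquiv_shift (cF T (T.s e)) (hcF T (T.s e)) rfl (oBx_spec T (T.s e) ⟨e, rfl⟩)

lemma minHom_covering (T : RGraph) : (minHom T).IsCovering := by
  have key : ∀ (e : T.E) (x : T.V) (he : T.s e = x),
      ((oBx T (T.s e)) ⟨e, rfl⟩).1 = ((oBx T x) ⟨e, he⟩).1 := by
    intro e x he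
    subst he
    rfl
  constructor
  · intro c
    induction c using Quotient.ind with
    | _ x => exact ⟨x, rfl⟩
  · apply uplp_of_outBij
    intro x
    constructor
    · rintro ⟨e₁, he₁⟩ ⟨e₂, he₂⟩ h
      have hval : ((oBx T (T.s e₁)) ⟨e₁, rfl⟩).1 = ((oBx T (T.s e₂)) ⟨e₂, rfl⟩).1 :=
        congrArg Subtype.val (congrArg Subtype.val h)
      rw [key e₁ x he₁, key e₂ x he₂] at hval
      have h5 : (oBx T x) ⟨e₁, he₁⟩ = (oBx T x) ⟨e₂, he₂⟩ := Subtype.ext hval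
      have h6 := (oBx T x).injective h5
      exact Subtype.ext (congrArg Subtype.val h6)
    · rintro ⟨⟨eb, heb⟩, hs⟩
      have hs2 : Quotient.mk (coneSetoid T) (T.s eb) = Quotient.mk (coneSetoid T) x := hs
      have hs' : T.s eb = (Quotient.mk (coneSetoid T) x).out := by
        rw [← heb, hs2]
      refine ⟨(oBx T x).symm ⟨eb, hs'⟩, ?_⟩
      apply Subtype.ext
      apply Subtype.ext
      show ((oBx T (T.s ((oBx T x).symm ⟨eb, hs'⟩).1))
        ⟨((oBx T x).symm ⟨eb, hs'⟩).1, rfl⟩).1 = eb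
      rw [key _ x ((oBx T x).symm ⟨eb, hs'⟩).2]
      show ((oBx T x) ((oBx T x).symm ⟨eb, hs'⟩)).1 = eb
      rw [Equiv.apply_symm_apply]

lemma minQuot_min (T : RGraph) {B : RGraph} (hB : IsCovQuotient T B) :
    Cardinal.mk (minQuot T).V ≤ Cardinal.mk B.V := by
  obtain ⟨pB, hpB⟩ := hB
  have hsurj : Function.Surjective
      (fun b : B.V => (Quotient.mk (coneSetoid T) (Function.surjInv hpB.1 b))) := by
    intro c
    induction c using Quotient.ind with
    | _ x =>
      refine ⟨pB.v x, Quotient.sound ?_⟩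
      exact coneEquiv_of_cover hpB (Function.surjInv_eq hpB.1 (pB.v x))
  exact Cardinal.mk_le_of_surjective hsurj

lemma minQuot_isMin (T : RGraph) : IsMinCovQuotient T (minQuot T) :=
  ⟨⟨minHom T, minHom_covering T⟩, fun B hB => minQuot_min T hB⟩

lemma min_cone_eq {T : RGraph} (hFMC : FinManyCones T) {A : RGraph} {p : GraphHom T A}
    (hp : p.IsCovering)
    (hmin : ∀ B : RGraph, IsCovQuotient T B → Cardinal.mk A.V ≤ Cardinal.mk B.V) :
    Finite A.V ∧ ∀ u w : T.V, ConeEquiv T u w → p.v u = p.v w := by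
  classical
  haveI hQfin : Finite (Quotient (coneSetoid T)) := finite_quotV hFMC
  have h1 : Cardinal.mk A.V ≤ Cardinal.mk (Quotient (coneSetoid T)) :=
    hmin (minQuot T) ⟨minHom T, minHom_covering T⟩
  haveI hAfin : Finite A.V := by
    have h2 : Cardinal.mk (Quotient (coneSetoid T)) < Cardinal.aleph0 :=
      Cardinal.lt_aleph0_of_finite _
    exact Cardinal.lt_aleph0_iff_finite.mp (lt_of_le_of_lt h1 h2)
  set ψ : A.V → Quotient (coneSetoid T) :=
    fun b => Quotient.mk (coneSetoid T) (Function.surjInv hp.1 b) with hψ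
  have hψp : ∀ x : T.V, ψ (p.v x) = Quotient.mk (coneSetoid T) x := fun x =>
    Quotient.sound (coneEquiv_of_cover hp (Function.surjInv_eq hp.1 (p.v x)))
  have hψsurj : Function.Surjective ψ := by
    intro c
    induction c using Quotient.ind with
    | _ x => exact ⟨p.v x, hψp x⟩
  have hψinj : Function.Injective ψ := by
    haveI := Fintype.ofFinite A.V
    haveI := Fintype.ofFinite (Quotient (coneSetoid T))
    have hc1 : Fintype.card (Quotient (coneSetoid T)) ≤ Fintype.card A.V :=
      Fintype.card_le_of_surjective ψ hψsurj
    have hc2 : Fintype.card A.V ≤ Fintype.card (Quotient (coneSetoid T)) := by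
      obtain ⟨emb⟩ := (Cardinal.le_def _ _).mp h1
      exact Fintype.card_le_of_embedding emb
    exact ((Fintype.bijective_iff_surjective_and_card ψ).mpr
      ⟨hψsurj, le_antisymm hc2 hc1⟩).1
  refine ⟨hAfin, fun u w hce => ?_⟩
  apply hψinj
  rw [hψp u, hψp w]
  exact Quotient.sound hce


/-! ### Pigeonhole on finite quotients -/

lemma pigeonhole_path {A : RGraph} [Fintype A.V] {a : A.V} {l : List A.E}
    (hl : A.PathFrom a l) (hlen : Fintype.card A.V ≤ l.length) :
    ∃ (qq : A.V) (c : List A.E), A.PathFrom qq c ∧ c ≠ [] ∧ A.pathTarget qq c = qq ∧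
      A.Reach qq (A.pathTarget a l) := by
  have main : ∀ (i j : ℕ), i < j → j ≤ l.length →
      A.pathTarget a (l.take i) = A.pathTarget a (l.take j) →
      ∃ (qq : A.V) (c : List A.E), A.PathFrom qq c ∧ c ≠ [] ∧ A.pathTarget qq c = qq ∧
        A.Reach qq (A.pathTarget a l) := by
    intro i j hij hjlen heq
    set c := (l.take j).drop i with hcdef
    have htij : l.take i = (l.take j).take i := by
      rw [List.take_take]
      congr 1
      omega
    have hdecomp : l.take j = l.take i ++ c := by
      rw [htij, hcdef, List.take_append_drop]
    have hl' : A.PathFrom a (l.take j ++ l.drop j) := by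
      rw [List.take_append_drop]; exact hl
    have h1 := pathFrom_append'.mp hl'
    have htar : A.pathTarget (A.pathTarget a (l.take j)) (l.drop j) = A.pathTarget a l := by
      rw [← pathTarget_append, List.take_append_drop]
    have h2 : A.PathFrom a (l.take i ++ c) := by rw [← hdecomp]; exact h1.1
    have h3 := pathFrom_append'.mp h2
    have hctar : A.pathTarget (A.pathTarget a (l.take i)) c = A.pathTarget a (l.take i) := by
      rw [← pathTarget_append, ← hdecomp, ← heq]
    have hclen : c.length = j - i := by
      rw [hcdef, List.length_drop, List.length_take]
      omega
    refine ⟨A.pathTarget a (l.take i), c, h3.2, ?_, hctar, ?_⟩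
    · intro h0
      rw [h0] at hclen
      simp at hclen
      omega
    · refine ⟨l.drop j, ?_, ?_⟩
      · rw [heq]
        exact h1.2
      · rw [heq]
        exact htar
  have hcard : Fintype.card A.V < Fintype.card (Fin (l.length + 1)) := by
    simp
    omega
  obtain ⟨i, j, hij, hfij⟩ := Fintype.exists_ne_map_eq_of_card_lt
    (fun i : Fin (l.length + 1) => A.pathTarget a (l.take i.1)) hcard
  rcases lt_trichotomy i.1 j.1 with h | h | h
  · exact main i.1 j.1 h (by omega) hfij
  · exact absurd (Fin.ext h) hij
  · exact main j.1 i.1 h (by omega) hfij.symm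

/-! ### Every minimal covering quotient has a recurrent double edge -/

lemma min_rde {T : RGraph} (hU : T.IsTree) (hLF : T.LocallyFinite) (hFMC : FinManyCones T)
    (hsw : {v : T.V | SwapAt T v}.Infinite) {A : RGraph} (hmin : IsMinCovQuotient T A) :
    HasRecDoubleEdge A := by
  classical
  obtain ⟨⟨p, hp⟩, hminimal⟩ := hmin
  obtain ⟨hAfin, hcone⟩ := min_cone_eq hFMC hp hminimal
  haveI := hAfin
  haveI := Fintype.ofFinite A.V
  obtain ⟨v, hvS, hvdeep⟩ := exists_deep hU hLF hsw (Fintype.card A.V)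
  obtain ⟨f₁, f₂, hfne, hf₁, hf₂, hce⟩ := hvS
  have he12 : p.e f₁ ≠ p.e f₂ := by
    intro h
    apply hfne
    have h2 := (cover_outBij hp v).1
      (a₁ := ⟨f₁, hf₁⟩) (a₂ := ⟨f₂, hf₂⟩) (Subtype.ext h)
    exact congrArg Subtype.val h2
  have hs12 : A.s (p.e f₁) = A.s (p.e f₂) := by rw [p.s_eq, p.s_eq, hf₁, hf₂]
  have ht12 : A.t (p.e f₁) = A.t (p.e f₂) := by
    rw [p.t_eq, p.t_eq]
    exact hcone _ _ hce
  have hrl : A.PathFrom A.root ((rp hU v).1.map p.e) := by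
    rw [← p.root_eq]
    exact p.pathFrom_map (rp hU v).2
  have hlen : Fintype.card A.V ≤ ((rp hU v).1.map p.e).length := by
    rw [List.length_map]
    exact hvdeep
  have htar : A.pathTarget A.root ((rp hU v).1.map p.e) = p.v v := by
    rw [← p.root_eq, p.pathTarget_map, rp_target]
  obtain ⟨qq, c, hc, hcne, hcc, hreach⟩ := pigeonhole_path hrl hlen
  refine ⟨p.e f₁, p.e f₂, he12, hs12, ht12, Or.inr ⟨qq, c, hc, hcne, hcc, ?_⟩⟩
  rw [p.s_eq, hf₁]
  rw [htar] at hreach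
  exact hreach

/-! ### Upper bound: the automorphism group has at most continuum many elements -/

lemma countable_V {T : RGraph} (hU : T.IsTree) (hLF : T.LocallyFinite) : Countable T.V := by
  have hsets : ∀ n : ℕ, ({l : List T.E | T.PathFrom T.root l ∧ l.length = n}).Countable := by
    intro n
    haveI : Finite ↥{l : List T.E | T.PathFrom T.root l ∧ l.length = n} :=
      finite_paths hLF n T.root
    exact (Set.toFinite _).countable
  have hcu : ({l : List T.E | T.PathFrom T.root l}).Countable := by
    have hsub : {l : List T.E | T.PathFrom T.root l} ⊆
        ⋃ n, {l : List T.E | T.PathFrom T.root l ∧ l.length = n} := by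
      intro l hl
      exact Set.mem_iUnion.mpr ⟨l.length, hl, rfl⟩
    exact (Set.countable_iUnion hsets).mono hsub
  haveI : Countable {l : List T.E // T.PathFrom T.root l} := hcu.to_subtype
  exact Countable.of_equiv _ (Equiv.ofBijective _ hU)

lemma aut_le_continuum {T : RGraph} (hU : T.IsTree) (hLF : T.LocallyFinite) :
    Cardinal.mk ↥T.autGroup ≤ Cardinal.continuum := by
  haveI := countable_V hU hLF
  have h1 : Cardinal.mk ↥T.autGroup ≤ Cardinal.mk (T.V → T.V) := by
    apply Cardinal.mk_le_of_injective (f := fun g : ↥T.autGroup => ⇑(g.1))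
    intro g1 g2 h
    exact Subtype.ext (DFunLike.coe_injective h)
  have h2 : Cardinal.mk (T.V → T.V) = Cardinal.mk T.V ^ Cardinal.mk T.V :=
    (Cardinal.power_def T.V T.V).symm
  have hV : Cardinal.mk T.V ≤ Cardinal.aleph0 := Cardinal.mk_le_aleph0
  have h3 : Cardinal.mk T.V ^ Cardinal.mk T.V ≤ Cardinal.aleph0 ^ Cardinal.aleph0 :=
    le_trans (Cardinal.power_le_power_right hV)
      (Cardinal.power_le_power_left Cardinal.aleph0_ne_zero hV)
  have h4 : Cardinal.aleph0 ^ Cardinal.aleph0 = Cardinal.continuum := by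
    rw [Cardinal.power_self_eq le_rfl, Cardinal.two_power_aleph0]
  calc Cardinal.mk ↥T.autGroup ≤ Cardinal.mk (T.V → T.V) := h1
    _ = Cardinal.mk T.V ^ Cardinal.mk T.V := h2
    _ ≤ Cardinal.aleph0 ^ Cardinal.aleph0 := h3
    _ = Cardinal.continuum := h4

end StmtAux



/-- Size of the automorphism group. For a self-similar tree `T` the
following are equivalent: (i) some covering quotient of `T` has a recurrent double
edge; (ii) every minimal covering quotient of `T` has a recurrent double edge;
(iii) `Aut(T)` is infinite; (iv) `Aut(T)` is uncountable. Consequently, `Aut(T)` is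
either finite or of cardinality the continuum. -/
theorem stmt18 (T : RGraph) (hT : SelfSimilarTree T) :
    ((∃ A : RGraph, IsCovQuotient T A ∧ HasRecDoubleEdge A) ↔
      (∀ Abar : RGraph, IsMinCovQuotient T Abar → HasRecDoubleEdge Abar)) ∧
    ((∀ Abar : RGraph, IsMinCovQuotient T Abar → HasRecDoubleEdge Abar) ↔
      Infinite ↥T.autGroup) ∧
    (Infinite ↥T.autGroup ↔ ¬ Countable ↥T.autGroup) ∧
    (Finite ↥T.autGroup ∨ Cardinal.mk ↥T.autGroup = Cardinal.continuum) := by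
  obtain ⟨hU, hLF, hFMC⟩ := hT
  have hminq : IsMinCovQuotient T (StmtAux.minQuot T) := StmtAux.minQuot_isMin T
  have himp1 : {v : T.V | StmtAux.SwapAt T v}.Infinite →
      ∀ Abar : RGraph, IsMinCovQuotient T Abar → HasRecDoubleEdge Abar :=
    fun hsw Abar h => StmtAux.min_rde hU hLF hFMC hsw h
  have himp2 : (∃ A : RGraph, IsCovQuotient T A ∧ HasRecDoubleEdge A) →
      Cardinal.continuum ≤ Cardinal.mk ↥T.autGroup := StmtAux.continuum_le_aut hU
  have himp3 : Infinite ↥T.autGroup → {v : T.V | StmtAux.SwapAt T v}.Infinite :=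
    StmtAux.swap_infinite_of_aut_infinite hU hLF
  have hub := StmtAux.aut_le_continuum hU hLF
  have hci : Cardinal.continuum ≤ Cardinal.mk ↥T.autGroup → Infinite ↥T.autGroup :=
    fun h => Cardinal.infinite_iff.mpr (le_trans Cardinal.aleph0_le_continuum h)
  have hfw : (∀ Abar : RGraph, IsMinCovQuotient T Abar → HasRecDoubleEdge Abar) →
      ∃ A : RGraph, IsCovQuotient T A ∧ HasRecDoubleEdge A :=
    fun h => ⟨StmtAux.minQuot T, hminq.1, h _ hminq⟩
  have hnc : Cardinal.continuum ≤ Cardinal.mk ↥T.autGroup → ¬ Countable ↥T.autGroup := by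
    intro h hcnt
    haveI := hcnt
    have h2 : Cardinal.mk ↥T.autGroup ≤ Cardinal.aleph0 := Cardinal.mk_le_aleph0
    exact lt_irrefl _ (lt_of_lt_of_le Cardinal.aleph0_lt_continuum (h.trans h2))
  refine ⟨⟨fun h => himp1 (himp3 (hci (himp2 h))), hfw⟩,
    ⟨fun h => hci (himp2 (hfw h)), fun hinf => himp1 (himp3 hinf)⟩,
    ⟨fun hinf => hnc (himp2 (hfw (himp1 (himp3 hinf)))), ?_⟩, ?_⟩
  · intro h
    by_contra h2
    rw [not_infinite_iff_finite] at h2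
    exact h (@Finite.to_countable _ h2)
  · by_cases hI : Infinite ↥T.autGroup
    · exact Or.inr (le_antisymm hub (himp2 (hfw (himp1 (himp3 hI)))))
    · rw [not_infinite_iff_finite] at hI
      exact Or.inl hI
end
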